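/- arXiv:0811.0835 — 9 statements merged into one kernel-verified Lean document; each statement's English description precedes it below -/
import Mathlib

section
/- Let f : gl(n,ℂ) → ℂ be a polynomial invariant under conjugation by GL(n,ℂ). For any x ∈ gl(n,ℂ), the gradient ∇f(x) of f with respect to the trace form (defined by trace(∇f(x)·z) = d/dt|_{t=0} f(x+tz) for all z) commutes with x, i.e., [∇f(x), x] = 0. -/
open Matrix

attribute [local instance] Matrix.linftyOpNormedRing Matrix.linftyOpNormedAlgebra

private lemma trace_mul_std {n : ℕ} (A : Matrix (Fin n) (Fin n) ℂ) (i j : Fin n) :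
    (A * Matrix.single j i 1).trace = A i j := by
  simp [Matrix.trace, Matrix.diag, Matrix.mul_apply, Matrix.single, ite_and]

/-- If `f : gl(n,ℂ) → ℂ` is a polynomial function invariant under conjugation by
`GL(n,ℂ)`, and `gradf x` is its gradient with respect to the trace form
(`trace (gradf x * z) = d/dt|₀ f (x + t z)` for all `z`), then `[∇f(x), x] = 0`. -/
theorem grad_invariant_commutes (n : ℕ)
    (f : Matrix (Fin n) (Fin n) ℂ → ℂ)
    (hpoly : ∃ P : MvPolynomial (Fin n × Fin n) ℂ,
      ∀ x, f x = MvPolynomial.eval (fun p => x p.1 p.2) P)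
    (hinv : ∀ g : GL (Fin n) ℂ, ∀ x : Matrix (Fin n) (Fin n) ℂ,
      f ((g : Matrix (Fin n) (Fin n) ℂ) * x * ((g⁻¹ : GL (Fin n) ℂ) : Matrix (Fin n) (Fin n) ℂ)) = f x)
    (gradf : Matrix (Fin n) (Fin n) ℂ → Matrix (Fin n) (Fin n) ℂ)
    (hgrad : ∀ x z : Matrix (Fin n) (Fin n) ℂ,
      (gradf x * z).trace = deriv (fun t : ℂ => f (x + t • z)) 0)
    (x : Matrix (Fin n) (Fin n) ℂ) :
    gradf x * x - x * gradf x = 0 := by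
  classical
  obtain ⟨P, hP⟩ := hpoly
  haveI : CompleteSpace (Matrix (Fin n) (Fin n) ℂ) :=
    FiniteDimensional.complete ℂ _
  -- `f` is analytic, hence differentiable
  have hfd : ∀ y : Matrix (Fin n) (Fin n) ℂ, DifferentiableAt ℂ f y := by
    intro y
    have h1 : ∀ p : Fin n × Fin n,
        AnalyticAt ℂ (fun x : Matrix (Fin n) (Fin n) ℂ => x p.1 p.2) y := by
      intro p
      let φ : Matrix (Fin n) (Fin n) ℂ →ₗ[ℂ] ℂ :=
        { toFun := fun x => x p.1 p.2
          map_add' := fun a b => rfl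
          map_smul' := fun c a => rfl }
      exact (LinearMap.toContinuousLinearMap φ).analyticAt y
    have h2 : AnalyticAt ℂ
        (fun x : Matrix (Fin n) (Fin n) ℂ =>
          MvPolynomial.aeval (fun p : Fin n × Fin n => x p.1 p.2) P) y :=
      AnalyticAt.aeval_mvPolynomial h1 P
    have heq : f = fun x : Matrix (Fin n) (Fin n) ℂ =>
        MvPolynomial.aeval (fun p : Fin n × Fin n => x p.1 p.2) P := by
      funext z
      rw [hP, ← MvPolynomial.coe_aeval_eq_eval]
      rfl
    rw [heq]
    exact h2.differentiableAt
  -- the gradient realizes the Fréchet derivative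
  have hgrad' : ∀ z : Matrix (Fin n) (Fin n) ℂ,
      (gradf x * z).trace = fderiv ℂ f x z := by
    intro z
    have hc : HasDerivAt (fun t : ℂ => x + t • z) z 0 := by
      have := ((hasDerivAt_id (0 : ℂ)).smul_const z).const_add x
      simp only [id, one_smul] at this
      exact this
    have hF : HasFDerivAt f (fderiv ℂ f x) (x + (0 : ℂ) • z) := by
      rw [show x + (0 : ℂ) • z = x by simp]
      exact (hfd x).hasFDerivAt
    have := (hF.comp_hasDerivAt 0 hc).deriv
    rw [hgrad x z]
    simp [Function.comp_def] at this
    exact this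
  -- invariance kills brackets
  have key : ∀ y : Matrix (Fin n) (Fin n) ℂ, fderiv ℂ f x (y * x - x * y) = 0 := by
    intro y
    set c : ℂ → Matrix (Fin n) (Fin n) ℂ :=
      fun t => (1 + t • y) * x * Ring.inverse (1 + t • y) with hcdef
    have hu : HasDerivAt (fun t : ℂ => (1 : Matrix (Fin n) (Fin n) ℂ) + t • y) y 0 := by
      have := ((hasDerivAt_id (0 : ℂ)).smul_const y).const_add 1
      simp only [id, one_smul] at this
      exact this
    have hinvF : HasFDerivAt (Ring.inverse (M₀ := Matrix (Fin n) (Fin n) ℂ))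
        (-(ContinuousLinearMap.mulLeftRight ℂ _ 1 1)) ((1 : Matrix (Fin n) (Fin n) ℂ) + (0:ℂ) • y) := by
      simpa using hasFDerivAt_ringInverse (𝕜 := ℂ) (1 : (Matrix (Fin n) (Fin n) ℂ)ˣ)
    have hv : HasDerivAt (fun t : ℂ => Ring.inverse ((1 : Matrix (Fin n) (Fin n) ℂ) + t • y)) (-y) 0 := by
      have := hinvF.comp_hasDerivAt 0 hu
      simp [Function.comp_def] at this
      exact this
    have hcd : HasDerivAt c (y * x - x * y) 0 := by
      have h1 : HasDerivAt (fun t : ℂ => ((1 : Matrix (Fin n) (Fin n) ℂ) + t • y) * x) (y * x) 0 :=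
        hu.mul_const x
      have := h1.mul hv
      simp [hcdef, Pi.mul_def, mul_neg, ← sub_eq_add_neg] at this
      exact this
    have hev : (fun t => f (c t)) =ᶠ[nhds (0 : ℂ)] fun _ => f x := by
      have hopen : IsOpen {t : ℂ | ‖t • y‖ < 1} :=
        isOpen_lt (by fun_prop) continuous_const
      have h0 : (0 : ℂ) ∈ {t : ℂ | ‖t • y‖ < 1} := by simp
      filter_upwards [hopen.mem_nhds h0] with t ht
      set u : (Matrix (Fin n) (Fin n) ℂ)ˣ := Units.oneSub (-(t • y)) (by simpa using ht) with hudef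
      have huval : (u : Matrix (Fin n) (Fin n) ℂ) = 1 + t • y := by
        simp [hudef, Units.oneSub, sub_neg_eq_add]
      have h2 : Ring.inverse ((1 : Matrix (Fin n) (Fin n) ℂ) + t • y)
          = ((u⁻¹ : (Matrix (Fin n) (Fin n) ℂ)ˣ) : Matrix (Fin n) (Fin n) ℂ) := by
        rw [← huval, Ring.inverse_unit]
      have : c t = (u : Matrix (Fin n) (Fin n) ℂ) * x *
          ((u⁻¹ : (Matrix (Fin n) (Fin n) ℂ)ˣ) : Matrix (Fin n) (Fin n) ℂ) := by
        simp only [hcdef]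
        rw [h2, ← huval]
      rw [this]
      exact hinv u x
    have hconst : HasDerivAt (fun t => f (c t)) 0 0 :=
      (hasDerivAt_const (0 : ℂ) (f x)).congr_of_eventuallyEq hev
    have hcomp : HasDerivAt (fun t => f (c t)) (fderiv ℂ f x (y * x - x * y)) 0 := by
      have hfx : HasFDerivAt f (fderiv ℂ f x) (c 0) := by
        rw [show c 0 = x by simp [hcdef]]
        exact (hfd x).hasFDerivAt
      exact hfx.comp_hasDerivAt 0 hcd
    exact hcomp.unique hconst
  -- nondegeneracy of the trace form
  have key2 : ∀ y : Matrix (Fin n) (Fin n) ℂ,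
      ((gradf x * x - x * gradf x) * y).trace = 0 := by
    intro y
    have h : (gradf x * (y * x)).trace - (gradf x * (x * y)).trace = 0 := by
      have h' := hgrad' (y * x - x * y)
      rw [key y] at h'
      simpa [mul_sub, trace_sub] using h'
    have e1 : (gradf x * (y * x)).trace = (x * gradf x * y).trace := by
      rw [← mul_assoc, Matrix.trace_mul_cycle]
    have e2 : (gradf x * (x * y)).trace = (gradf x * x * y).trace := by rw [mul_assoc]
    rw [sub_mul, trace_sub, sub_eq_zero]
    rw [e1, e2, sub_eq_zero] at h
    exact h.symm
  ext i j
  have h := key2 (Matrix.single j i 1)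
  rw [trace_mul_std] at h
  simpa using h
end

section
/- Let x ∈ gl(n,ℂ) and let f_{i,j}(x) = trace((x_i)^j), where x_i denotes the top-left i×i submatrix of x. For fixed i < n, the curve t ↦ Ad(exp(-t·j·(x_i)^{j-1}))·x (where (x_i)^{j-1} is regarded as an n×n matrix with zeros outside the top-left i×i block) leaves the i×i cutoff unchanged: for all t, the top-left i×i submatrix of Ad(exp(-t·j·(x_i)^{j-1}))·x equals x_i. -/
open Matrix

/-- The top-left `i×i` cutoff of `x`, viewed as an `n×n` matrix
(zero outside the top-left `i×i` block). -/
def cutoff (n : ℕ) (x : Matrix (Fin n) (Fin n) ℂ) (i : ℕ) : Matrix (Fin n) (Fin n) ℂ :=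
  Matrix.of fun a b => if (a : ℕ) < i ∧ (b : ℕ) < i then x a b else 0

/-- The `k`-th power of the cutoff `x_i`, computed in `gl(i)` and embedded back
into `gl(n)` as a top-left block (in particular `(x_i)^0` is the embedded
identity of `gl(i)`). -/
def blkpow (n : ℕ) (x : Matrix (Fin n) (Fin n) ℂ) (i k : ℕ) : Matrix (Fin n) (Fin n) ℂ :=
  cutoff n ((cutoff n x i) ^ k) i

lemma cutoff_apply (n : ℕ) (x : Matrix (Fin n) (Fin n) ℂ) (i : ℕ) (a b : Fin n) :
    cutoff n x i a b = if (a : ℕ) < i ∧ (b : ℕ) < i then x a b else 0 := rfl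

lemma E_apply (n i : ℕ) (a b : Fin n) :
    cutoff n 1 i a b = if a = b ∧ (a : ℕ) < i then 1 else 0 := by
  simp only [cutoff_apply, Matrix.one_apply]
  by_cases h : a = b
  · subst h; by_cases h2 : (a : ℕ) < i <;> simp [h2]
  · simp [h]

lemma mulE (n i : ℕ) (y : Matrix (Fin n) (Fin n) ℂ) (a b : Fin n) :
    (y * cutoff n 1 i) a b = if (b : ℕ) < i then y a b else 0 := by
  simp only [Matrix.mul_apply, E_apply]
  rw [Finset.sum_eq_single b]
  · by_cases h : (b : ℕ) < i <;> simp [h]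
  · intro c _ hc; rw [if_neg (fun h => hc h.1), mul_zero]
  · simp

lemma Emul (n i : ℕ) (y : Matrix (Fin n) (Fin n) ℂ) (a b : Fin n) :
    (cutoff n 1 i * y) a b = if (a : ℕ) < i then y a b else 0 := by
  simp only [Matrix.mul_apply, E_apply]
  rw [Finset.sum_eq_single a]
  · by_cases h : (a : ℕ) < i <;> simp [h]
  · intro c _ hc; rw [if_neg (fun h => hc h.1.symm), zero_mul]
  · simp

lemma cutoff_eq_EyE (n i : ℕ) (y : Matrix (Fin n) (Fin n) ℂ) :
    cutoff n y i = cutoff n 1 i * y * cutoff n 1 i := by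
  ext a b
  simp only [cutoff_apply, mulE, Emul]
  by_cases ha : (a : ℕ) < i <;> by_cases hb : (b : ℕ) < i <;> simp [ha, hb]

lemma cutoff_mulE (n i : ℕ) (y : Matrix (Fin n) (Fin n) ℂ) :
    cutoff n y i * cutoff n 1 i = cutoff n y i := by
  ext a b
  simp only [mulE, cutoff_apply]
  by_cases hb : (b : ℕ) < i <;> simp [hb]

lemma cutoff_Emul (n i : ℕ) (y : Matrix (Fin n) (Fin n) ℂ) :
    cutoff n 1 i * cutoff n y i = cutoff n y i := by
  ext a b
  simp only [Emul, cutoff_apply]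
  by_cases ha : (a : ℕ) < i <;> simp [ha]

/-- For `f_{i,j}(x) = tr((x_i)^j)` with `i < n`, the curve
`t ↦ Ad(exp(-t·j·(x_i)^{j-1}))·x` leaves the `i×i` cutoff of `x` unchanged. -/
theorem cutoff_invariant_under_flow (n i j : ℕ) (hi : i < n) (hj : 1 ≤ j)
    (x : Matrix (Fin n) (Fin n) ℂ) (t : ℂ) :
    cutoff n
      (NormedSpace.exp (-(t • ((j : ℂ) • blkpow n x i (j - 1)))) * x *
        NormedSpace.exp (t • ((j : ℂ) • blkpow n x i (j - 1)))) i
      = cutoff n x i := by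
  set E := cutoff n 1 i with hE
  set C := cutoff n x i with hC
  set A := blkpow n x i (j - 1) with hA
  set M := t • ((j : ℂ) • A) with hM
  have hAE : A * E = A := by rw [hA, hE]; exact cutoff_mulE n i _
  have hEA : E * A = A := by rw [hA, hE]; exact cutoff_Emul n i _
  have hCE : C * E = C := by rw [hC, hE]; exact cutoff_mulE n i _
  have hEC : E * C = C := by rw [hC, hE]; exact cutoff_Emul n i _
  have cAE : Commute A E := by rw [Commute, SemiconjBy, hAE, hEA]
  have hApow : A = E * C ^ (j - 1) * E := by
    rw [hA, blkpow, cutoff_eq_EyE, ← hC, ← hE]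
  have hECj : E * C ^ j = C ^ j := by
    obtain ⟨k, rfl⟩ := Nat.exists_eq_add_of_le hj
    rw [pow_add, pow_one, ← mul_assoc, hEC]
  have hCjE : C ^ j * E = C ^ j := by
    obtain ⟨k, rfl⟩ := Nat.exists_eq_add_of_le hj
    rw [add_comm 1 k, pow_add, pow_one, mul_assoc, hCE]
  have hpow : C ^ (j - 1) * C = C ^ j := by
    rw [← pow_succ]; congr 1; omega
  have hpow' : C * C ^ (j - 1) = C ^ j := by
    rw [← pow_succ']; congr 1; omega
  have h1 : A * C = C ^ j := by
    rw [hApow, mul_assoc, hEC, mul_assoc, hpow, hECj]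
  have h2 : C * A = C ^ j := by
    rw [hApow, ← mul_assoc, ← mul_assoc, hCE, hpow', hCjE]
  have cAC : Commute A C := h1.trans h2.symm
  have cME : Commute M E := (cAE.smul_left _).smul_left _
  have cMC : Commute M C := (cAC.smul_left _).smul_left _
  have cPE : NormedSpace.exp (-M) * E = E * NormedSpace.exp (-M) :=
    (cME.neg_left.exp_left).eq
  have cQE : NormedSpace.exp M * E = E * NormedSpace.exp M :=
    (cME.exp_left).eq
  have cPC : NormedSpace.exp (-M) * C = C * NormedSpace.exp (-M) :=
    (cMC.neg_left.exp_left).eq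
  have hPQ : NormedSpace.exp (-M) * NormedSpace.exp M = 1 := by
    have h := Matrix.exp_add_of_commute (-M) M (Commute.refl M).neg_left
    rw [neg_add_cancel, NormedSpace.exp_zero] at h
    exact h.symm
  rw [cutoff_eq_EyE, ← hE]
  calc E * (NormedSpace.exp (-M) * x * NormedSpace.exp M) * E
      = (E * NormedSpace.exp (-M)) * x * (NormedSpace.exp M * E) := by
        simp only [mul_assoc]
    _ = (NormedSpace.exp (-M) * E) * x * (E * NormedSpace.exp M) := by
        rw [← cPE, cQE]
    _ = NormedSpace.exp (-M) * (E * x * E) * NormedSpace.exp M := by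
        simp only [mul_assoc]
    _ = NormedSpace.exp (-M) * C * NormedSpace.exp M := by
        rw [← cutoff_eq_EyE, ← hC]
    _ = C * NormedSpace.exp (-M) * NormedSpace.exp M := by rw [cPC]
    _ = C * (NormedSpace.exp (-M) * NormedSpace.exp M) := by rw [mul_assoc]
    _ = C := by rw [hPQ, mul_one]
end

section
/- Let x ∈ gl(n,ℂ), i < n, and j ≥ 1. The curve θ(t) = Ad(exp(-t·j·(x_i)^{j-1}))·x satisfies the ODE θ'(t) = [θ(t), j·(θ(t)_i)^{j-1}], i.e., it is an integral curve of the Hamiltonian vector field of f_{i,j}(x) = trace((x_i)^j) with respect to the Lie-Poisson structure, and this flow is defined for all complex time t. -/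
open Matrix

section AuxDeriv

open NormedSpace

private lemma aux_deriv (n : ℕ) (A x : Matrix (Fin n) (Fin n) ℂ) (t : ℂ) :
    Filter.Tendsto (slope (fun s : ℂ => exp (-(s • A)) * x * exp (s • A)) t)
      (nhdsWithin t {t}ᶜ)
      (nhds ((exp (-(t • A)) * x * exp (t • A)) * A -
        A * (exp (-(t • A)) * x * exp (t • A)))) := by
  letI : SeminormedRing (Matrix (Fin n) (Fin n) ℂ) := Matrix.linftyOpSemiNormedRing
  letI : NormedRing (Matrix (Fin n) (Fin n) ℂ) := Matrix.linftyOpNormedRing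
  letI : NormedAlgebra ℂ (Matrix (Fin n) (Fin n) ℂ) := Matrix.linftyOpNormedAlgebra
  refine hasDerivAt_iff_tendsto_slope.mp ?_
  have h1 : HasDerivAt (fun s : ℂ => exp (s • (-A))) ((-A) * exp (t • (-A))) t :=
    hasDerivAt_exp_smul_const' (𝕂 := ℂ) (-A) t
  have h2 : HasDerivAt (fun s : ℂ => exp (s • A)) (exp (t • A) * A) t :=
    hasDerivAt_exp_smul_const (𝕂 := ℂ) A t
  simp only [smul_neg] at h1
  have h3 := (h1.mul_const x).mul h2
  have h4 : (exp (-(t • A)) * x * exp (t • A)) * A -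
      A * (exp (-(t • A)) * x * exp (t • A)) =
      -A * exp (-(t • A)) * x * exp (t • A) +
        exp (-(t • A)) * x * (exp (t • A) * A) := by
    simp only [mul_assoc, neg_mul, sub_eq_neg_add]
  rw [h4]
  exact h3

end AuxDeriv

attribute [local instance] Matrix.normedAddCommGroup Matrix.normedSpace

section AuxAlg

variable (n i : ℕ)

private lemma cmul_pi (m : Matrix (Fin n) (Fin n) ℂ) :
    m * cutoff n 1 i = Matrix.of fun (a b : Fin n) => if (b : ℕ) < i then m a b else 0 := by
  ext a b
  rw [Matrix.mul_apply]
  simp only [cutoff, Matrix.of_apply, Matrix.one_apply]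
  rw [Finset.sum_eq_single b]
  · by_cases hb : (b : ℕ) < i <;> simp [hb]
  · intro c _ hc
    simp [hc]
  · simp

private lemma cpi_mul (m : Matrix (Fin n) (Fin n) ℂ) :
    cutoff n 1 i * m = Matrix.of fun (a b : Fin n) => if (a : ℕ) < i then m a b else 0 := by
  ext a b
  rw [Matrix.mul_apply]
  simp only [cutoff, Matrix.of_apply, Matrix.one_apply]
  rw [Finset.sum_eq_single a]
  · by_cases ha : (a : ℕ) < i <;> simp [ha]
  · intro c _ hc
    simp [Ne.symm hc]
  · simp

private lemma cpi_mul_pi (m : Matrix (Fin n) (Fin n) ℂ) :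
    cutoff n 1 i * m * cutoff n 1 i = cutoff n m i := by
  rw [cmul_pi, cpi_mul]
  ext a b
  simp only [cutoff, Matrix.of_apply]
  by_cases ha : (a : ℕ) < i <;> by_cases hb : (b : ℕ) < i <;> simp [ha, hb]

private lemma cpi_mul_cutoff (m : Matrix (Fin n) (Fin n) ℂ) :
    cutoff n 1 i * cutoff n m i = cutoff n m i := by
  rw [cpi_mul]
  ext a b
  simp only [cutoff, Matrix.of_apply]
  by_cases ha : (a : ℕ) < i <;> simp [ha]

private lemma ccutoff_mul_pi (m : Matrix (Fin n) (Fin n) ℂ) :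
    cutoff n m i * cutoff n 1 i = cutoff n m i := by
  rw [cmul_pi]
  ext a b
  simp only [cutoff, Matrix.of_apply]
  by_cases hb : (b : ℕ) < i <;> simp [hb]

private lemma ccommute_pi_cutoff (m : Matrix (Fin n) (Fin n) ℂ) :
    Commute (cutoff n 1 i) (cutoff n m i) := by
  unfold Commute SemiconjBy
  rw [cpi_mul_cutoff, ccutoff_mul_pi]

/-- conjugation by block-diagonal-commuting matrices interacts well with cutoff -/
private lemma cconj_cutoff (F E m : Matrix (Fin n) (Fin n) ℂ)
    (hF : Commute (cutoff n 1 i) F) (hE : Commute (cutoff n 1 i) E) :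
    cutoff n (F * m * E) i = F * cutoff n m i * E := by
  rw [← cpi_mul_pi n i (F * m * E), ← cpi_mul_pi n i m]
  have h1 : cutoff n 1 i * (F * m * E) * cutoff n 1 i =
      (cutoff n 1 i * F) * (m * (E * cutoff n 1 i)) := by
    simp only [mul_assoc]
  rw [h1, hF.eq, ← hE.eq]
  simp only [mul_assoc]

private lemma cconj_pow (F E B : Matrix (Fin n) (Fin n) ℂ)
    (hFE : F * E = 1) (hEF : E * F = 1) (k : ℕ) :
    (F * B * E) ^ k = F * B ^ k * E := by
  induction k with
  | zero => rw [pow_zero, pow_zero, mul_one, hFE]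
  | succ k ih =>
    rw [pow_succ, pow_succ, ih]
    have h1 : F * B ^ k * E * (F * B * E) = F * B ^ k * (E * F) * B * E := by
      simp only [mul_assoc]
    rw [h1, hEF, mul_one, mul_assoc F (B ^ k) B, ← mul_assoc]

end AuxAlg

/-- The key invariance: the blkpow of the conjugated matrix equals that of `x`. -/
private lemma blkpow_conj_invariant (n i j : ℕ) (x : Matrix (Fin n) (Fin n) ℂ) (t : ℂ) :
    blkpow n
      (NormedSpace.exp (-(t • ((j : ℂ) • blkpow n x i (j - 1)))) * x *
        NormedSpace.exp (t • ((j : ℂ) • blkpow n x i (j - 1)))) i (j - 1) =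
    blkpow n x i (j - 1) := by
  set P := blkpow n x i (j - 1) with hP
  set A := (j : ℂ) • P with hAdef
  set F := NormedSpace.exp (-(t • A)) with hF
  set E := NormedSpace.exp (t • A) with hE
  have hπP : Commute (cutoff n 1 i) P := ccommute_pi_cutoff n i _
  have hπA : Commute (cutoff n 1 i) A := hπP.smul_right _
  have hPA : Commute P A := (Commute.refl P).smul_right _
  have hπF : Commute (cutoff n 1 i) F := ((hπA.smul_right t).neg_right).exp_right
  have hπE : Commute (cutoff n 1 i) E := (hπA.smul_right t).exp_right
  have hPF : Commute P F := ((hPA.smul_right t).neg_right).exp_right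
  have hFE : F * E = 1 := by
    rw [hF, hE, ← Matrix.exp_add_of_commute (-(t • A)) (t • A) ((Commute.refl (t • A)).neg_left),
      neg_add_cancel, NormedSpace.exp_zero]
  have hEF : E * F = 1 := by
    rw [hF, hE, ← Matrix.exp_add_of_commute (t • A) (-(t • A)) ((Commute.refl (t • A)).neg_right),
      add_neg_cancel, NormedSpace.exp_zero]
  have hcut : cutoff n (F * x * E) i = F * cutoff n x i * E := cconj_cutoff n i F E x hπF hπE
  rw [blkpow, hcut, cconj_pow n F E _ hFE hEF, cconj_cutoff n i F E _ hπF hπE]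
  show F * P * E = P
  rw [← hPF.eq, mul_assoc, hFE, mul_one]

/-- The curve `θ(t) = Ad(exp(-t·j·(x_i)^{j-1}))·x` is, for every complex time `t`
(so the flow is globally defined), an integral curve of the Hamiltonian vector
field of `f_{i,j}(x) = tr((x_i)^j)`: it satisfies the ODE
`θ'(t) = [θ(t), j·(θ(t)_i)^{j-1}]`. -/
theorem flow_is_integral_curve (n i j : ℕ) (hi : i < n) (hj : 1 ≤ j)
    (x : Matrix (Fin n) (Fin n) ℂ) :
    ∀ t : ℂ,
      HasDerivAt
        (fun s : ℂ =>
          NormedSpace.exp (-(s • ((j : ℂ) • blkpow n x i (j - 1)))) * x *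
            NormedSpace.exp (s • ((j : ℂ) • blkpow n x i (j - 1))))
        (let θt := NormedSpace.exp (-(t • ((j : ℂ) • blkpow n x i (j - 1)))) * x *
            NormedSpace.exp (t • ((j : ℂ) • blkpow n x i (j - 1)));
          θt * ((j : ℂ) • blkpow n θt i (j - 1)) - ((j : ℂ) • blkpow n θt i (j - 1)) * θt)
        t := by
  intro t
  simp only [blkpow_conj_invariant n i j x t]
  set A := (j : ℂ) • blkpow n x i (j - 1) with hA
  refine hasDerivAt_iff_tendsto_slope.mpr ?_
  exact aux_deriv n A x t
end

section
/- The flows t ↦ Ad(exp(-t·j·(x_i)^{j-1}))·x and s ↦ Ad(exp(-s·k·(x_m)^{k-1}))·x associated to the functions f_{i,j}(x) = trace((x_i)^j) and f_{m,k}(x) = trace((x_m)^k) on gl(n,ℂ) commute for all i, m < n and all j, k: applying them in either order to any x ∈ gl(n,ℂ) yields the same result. -/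
open Matrix

/-- The time-`t` flow `x ↦ Ad(exp(-t·j·(x_i)^{j-1}))·x` of the Gelfand-Zeitlin
vector field associated to `f_{i,j}(x) = tr((x_i)^j)`. -/
noncomputable def gzFlow (n i j : ℕ) (t : ℂ) (x : Matrix (Fin n) (Fin n) ℂ) : Matrix (Fin n) (Fin n) ℂ :=
  NormedSpace.exp (-(t • ((j : ℂ) • blkpow n x i (j - 1)))) * x *
    NormedSpace.exp (t • ((j : ℂ) • blkpow n x i (j - 1)))

namespace GZaux

variable {n : ℕ}

/-- `y` is supported in the top-left `m×m` corner. -/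
def Supp (m : ℕ) (y : Matrix (Fin n) (Fin n) ℂ) : Prop :=
  ∀ a b : Fin n, ¬((a : ℕ) < m ∧ (b : ℕ) < m) → y a b = 0

/-- `P` is block diagonal with respect to the split at `m`. -/
def Blk (m : ℕ) (P : Matrix (Fin n) (Fin n) ℂ) : Prop :=
  ∀ a b : Fin n, ¬(((a : ℕ) < m) ↔ ((b : ℕ) < m)) → P a b = 0

lemma cutoff_apply (y : Matrix (Fin n) (Fin n) ℂ) (m : ℕ) (a b : Fin n) :
    cutoff n y m a b = if (a : ℕ) < m ∧ (b : ℕ) < m then y a b else 0 := rfl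

lemma supp_cutoff (y : Matrix (Fin n) (Fin n) ℂ) (m : ℕ) : Supp m (cutoff n y m) := by
  intro a b h; rw [cutoff_apply, if_neg h]

lemma cutoff_eq_self {m : ℕ} {y : Matrix (Fin n) (Fin n) ℂ} (h : Supp m y) :
    cutoff n y m = y := by
  ext a b
  rw [cutoff_apply]
  split_ifs with h'
  · rfl
  · exact (h a b h').symm

lemma supp_mono {i m : ℕ} (him : i ≤ m) {y : Matrix (Fin n) (Fin n) ℂ} (h : Supp i y) :
    Supp m y := fun a b hc =>
  h a b fun hab => hc ⟨hab.1.trans_le him, hab.2.trans_le him⟩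

lemma supp_mul {m : ℕ} {y z : Matrix (Fin n) (Fin n) ℂ} (hy : Supp m y) (hz : Supp m z) :
    Supp m (y * z) := by
  intro a b h
  rw [Matrix.mul_apply]
  apply Finset.sum_eq_zero
  intro c _
  by_cases ha : (a : ℕ) < m
  · have hb : ¬((b : ℕ) < m) := fun hb => h ⟨ha, hb⟩
    rw [hz c b fun h' => hb h'.2, mul_zero]
  · rw [hy a c fun h' => ha h'.1, zero_mul]

lemma supp_smul {m : ℕ} (c : ℂ) {y : Matrix (Fin n) (Fin n) ℂ} (hy : Supp m y) :
    Supp m (c • y) := by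
  intro a b h
  rw [Matrix.smul_apply, hy a b h, smul_zero]

lemma supp_neg {m : ℕ} {y : Matrix (Fin n) (Fin n) ℂ} (hy : Supp m y) :
    Supp m (-y) := by
  intro a b h
  rw [Matrix.neg_apply, hy a b h, neg_zero]

lemma supp_pow_succ {m : ℕ} {y : Matrix (Fin n) (Fin n) ℂ} (hy : Supp m y) (l : ℕ) :
    Supp m (y ^ (l + 1)) := by
  induction l with
  | zero => rw [pow_one]; exact hy
  | succ l ih => rw [pow_succ]; exact supp_mul ih hy

lemma blk_of_supp {m : ℕ} {y : Matrix (Fin n) (Fin n) ℂ} (h : Supp m y) : Blk m y :=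
  fun a b hab => h a b fun h' => hab (iff_of_true h'.1 h'.2)

lemma blk_one (m : ℕ) : Blk m (1 : Matrix (Fin n) (Fin n) ℂ) := by
  intro a b hab
  exact Matrix.one_apply_ne fun e => hab (e ▸ Iff.rfl)

/-- cutoff distributes over a product whose right factor is block diagonal. -/
lemma cutoff_mul_blk {m : ℕ} {Q : Matrix (Fin n) (Fin n) ℂ} (hQ : Blk m Q)
    (y : Matrix (Fin n) (Fin n) ℂ) :
    cutoff n (y * Q) m = cutoff n y m * cutoff n Q m := by
  ext a b
  simp only [cutoff_apply, Matrix.mul_apply]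
  split_ifs with h
  · apply Finset.sum_congr rfl
    intro c _
    by_cases hc : (c : ℕ) < m
    · simp [h.1, h.2, hc]
    · simp [hc, hQ c b fun e => hc (e.mpr h.2)]
  · symm
    apply Finset.sum_eq_zero
    intro c _
    by_cases ha : (a : ℕ) < m
    · have hb : ¬((b : ℕ) < m) := fun hb => h ⟨ha, hb⟩
      simp [hb]
    · simp [ha]

/-- cutoff distributes over a product whose left factor is block diagonal. -/
lemma blk_mul_cutoff {m : ℕ} {P : Matrix (Fin n) (Fin n) ℂ} (hP : Blk m P)
    (y : Matrix (Fin n) (Fin n) ℂ) :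
    cutoff n (P * y) m = cutoff n P m * cutoff n y m := by
  ext a b
  simp only [cutoff_apply, Matrix.mul_apply]
  split_ifs with h
  · apply Finset.sum_congr rfl
    intro c _
    by_cases hc : (c : ℕ) < m
    · simp [h.1, h.2, hc]
    · simp [hc, hP a c fun e => hc (e.mp h.1)]
  · symm
    apply Finset.sum_eq_zero
    intro c _
    by_cases ha : (a : ℕ) < m
    · have hb : ¬((b : ℕ) < m) := fun hb => h ⟨ha, hb⟩
      simp [hb]
    · simp [ha]

/-- a block-diagonal left factor can be cut off against a supported right factor. -/
lemma absorbL {m : ℕ} {P y : Matrix (Fin n) (Fin n) ℂ} (hP : Blk m P) (hy : Supp m y) :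
    P * y = cutoff n P m * y := by
  ext a b
  rw [Matrix.mul_apply, Matrix.mul_apply]
  apply Finset.sum_congr rfl
  intro c _
  by_cases hc : (c : ℕ) < m
  · by_cases ha : (a : ℕ) < m
    · rw [cutoff_apply, if_pos ⟨ha, hc⟩]
    · rw [hP a c fun e => ha (e.mpr hc), cutoff_apply, if_neg fun e => ha e.1]
  · rw [hy c b fun e => hc e.1, mul_zero, mul_zero]

lemma absorbR {m : ℕ} {Q y : Matrix (Fin n) (Fin n) ℂ} (hQ : Blk m Q) (hy : Supp m y) :
    y * Q = y * cutoff n Q m := by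
  ext a b
  rw [Matrix.mul_apply, Matrix.mul_apply]
  apply Finset.sum_congr rfl
  intro c _
  by_cases hc : (c : ℕ) < m
  · by_cases hb : (b : ℕ) < m
    · rw [cutoff_apply, if_pos ⟨hc, hb⟩]
    · rw [hQ c b fun e => hb (e.mp hc), cutoff_apply, if_neg fun e => hb e.2]
  · rw [hy a c fun e => hc e.2, zero_mul, zero_mul]

lemma one_cutoff_mul {m : ℕ} {y : Matrix (Fin n) (Fin n) ℂ} (hy : Supp m y) :
    cutoff n (1 : Matrix (Fin n) (Fin n) ℂ) m * y = y := by
  rw [← absorbL (blk_one m) hy, one_mul]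

lemma mul_one_cutoff {m : ℕ} {y : Matrix (Fin n) (Fin n) ℂ} (hy : Supp m y) :
    y * cutoff n (1 : Matrix (Fin n) (Fin n) ℂ) m = y := by
  rw [← absorbR (blk_one m) hy, mul_one]

lemma cutoff_mul_supp {m : ℕ} {v : Matrix (Fin n) (Fin n) ℂ} (hv : Supp m v)
    (u : Matrix (Fin n) (Fin n) ℂ) :
    cutoff n (u * v) m = cutoff n u m * v := by
  ext a b
  simp only [cutoff_apply, Matrix.mul_apply]
  split_ifs with h
  · apply Finset.sum_congr rfl
    intro c _
    by_cases hc : (c : ℕ) < m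
    · simp [h.1, hc]
    · simp [hc, hv c b fun e => hc e.1]
  · symm
    apply Finset.sum_eq_zero
    intro c _
    by_cases ha : (a : ℕ) < m
    · have hb : ¬((b : ℕ) < m) := fun hb => h ⟨ha, hb⟩
      simp [hv c b fun e => hb e.2]
    · simp [ha]

lemma exp_neg_mul_exp (z : Matrix (Fin n) (Fin n) ℂ) :
    NormedSpace.exp (-z) * NormedSpace.exp z = 1 := by
  rw [← Matrix.exp_add_of_commute (-z) z (Commute.neg_left (Commute.refl z)),
    neg_add_cancel, NormedSpace.exp_zero]

lemma exp_mul_exp_neg (z : Matrix (Fin n) (Fin n) ℂ) :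
    NormedSpace.exp z * NormedSpace.exp (-z) = 1 := by
  have := exp_neg_mul_exp (n := n) (-z)
  rwa [neg_neg] at this

lemma e_mul_apply (P : Matrix (Fin n) (Fin n) ℂ) (m : ℕ) (a b : Fin n) :
    (cutoff n (1 : Matrix (Fin n) (Fin n) ℂ) m * P) a b
      = if (a : ℕ) < m then P a b else 0 := by
  rw [Matrix.mul_apply]
  split_ifs with ha
  · rw [Finset.sum_eq_single a]
    · rw [cutoff_apply, if_pos ⟨ha, ha⟩, Matrix.one_apply_eq, one_mul]
    · intro c _ hca
      rw [cutoff_apply]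
      split_ifs with h
      · rw [Matrix.one_apply_ne (Ne.symm hca), zero_mul]
      · rw [zero_mul]
    · intro h; exact absurd (Finset.mem_univ a) h
  · apply Finset.sum_eq_zero
    intro c _
    rw [cutoff_apply, if_neg fun e => ha e.1, zero_mul]

lemma mul_e_apply (P : Matrix (Fin n) (Fin n) ℂ) (m : ℕ) (a b : Fin n) :
    (P * cutoff n (1 : Matrix (Fin n) (Fin n) ℂ) m) a b
      = if (b : ℕ) < m then P a b else 0 := by
  rw [Matrix.mul_apply]
  split_ifs with hb
  · rw [Finset.sum_eq_single b]
    · rw [cutoff_apply, if_pos ⟨hb, hb⟩, Matrix.one_apply_eq, mul_one]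
    · intro c _ hcb
      rw [cutoff_apply]
      split_ifs with h
      · rw [Matrix.one_apply_ne hcb, mul_zero]
      · rw [mul_zero]
    · intro h; exact absurd (Finset.mem_univ b) h
  · apply Finset.sum_eq_zero
    intro c _
    rw [cutoff_apply, if_neg fun e => hb e.2, mul_zero]

lemma blk_exp {m : ℕ} {A : Matrix (Fin n) (Fin n) ℂ} (hA : Supp m A) :
    Blk m (NormedSpace.exp A) := by
  have hcomm : Commute (cutoff n (1 : Matrix (Fin n) (Fin n) ℂ) m) A := by
    unfold Commute SemiconjBy
    rw [one_cutoff_mul hA, mul_one_cutoff hA]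
  have hC := hcomm.exp_right
  intro a b hab
  have h2 : (cutoff n (1 : Matrix (Fin n) (Fin n) ℂ) m * NormedSpace.exp A) a b
      = (NormedSpace.exp A * cutoff n (1 : Matrix (Fin n) (Fin n) ℂ) m) a b := by
    rw [hC.eq]
  rw [e_mul_apply, mul_e_apply] at h2
  by_cases ha : (a : ℕ) < m
  · have hb : ¬((b : ℕ) < m) := fun hb => hab (iff_of_true ha hb)
    rw [if_pos ha, if_neg hb] at h2
    exact h2
  · have hb : (b : ℕ) < m := by
      by_contra hb
      exact hab (iff_of_false ha hb)
    rw [if_neg ha, if_pos hb] at h2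
    exact h2.symm

lemma supp_blkpow (x : Matrix (Fin n) (Fin n) ℂ) (i l : ℕ) : Supp i (blkpow n x i l) :=
  supp_cutoff _ i

lemma commute_cutoff_blkpow (x : Matrix (Fin n) (Fin n) ℂ) (m l : ℕ) :
    Commute (cutoff n x m) (blkpow n x m l) := by
  unfold Commute SemiconjBy blkpow
  cases l with
  | zero =>
    rw [pow_zero, one_cutoff_mul (supp_cutoff x m), mul_one_cutoff (supp_cutoff x m)]
  | succ l =>
    rw [cutoff_eq_self (supp_pow_succ (supp_cutoff x m) l)]
    exact ((Commute.refl (cutoff n x m)).pow_right (l + 1)).eq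

lemma cutoff_cutoff {i m : ℕ} (him : i ≤ m) (y : Matrix (Fin n) (Fin n) ℂ) :
    cutoff n (cutoff n y m) i = cutoff n y i := by
  ext a b
  rw [cutoff_apply, cutoff_apply, cutoff_apply]
  by_cases h : (a : ℕ) < i ∧ (b : ℕ) < i
  · rw [if_pos h, if_pos h, if_pos ⟨h.1.trans_le him, h.2.trans_le him⟩]
  · rw [if_neg h, if_neg h]

/-- The flow of `f_{m,k}` leaves the `m×m` cutoff invariant. -/
lemma cutoff_gzFlow_self (m k : ℕ) (s : ℂ) (x : Matrix (Fin n) (Fin n) ℂ) :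
    cutoff n (gzFlow n m k s x) m = cutoff n x m := by
  set z := s • ((k : ℂ) • blkpow n x m (k - 1)) with hz
  have hzsupp : Supp m z := supp_smul _ (supp_smul _ (supp_blkpow x m (k - 1)))
  have hQ : Blk m (NormedSpace.exp z) := blk_exp hzsupp
  have hQ' : Blk m (NormedSpace.exp (-z)) := blk_exp (supp_neg hzsupp)
  have hxm : Supp m (cutoff n x m) := supp_cutoff x m
  have hcz : Commute (cutoff n x m) z := by
    exact ((commute_cutoff_blkpow x m (k - 1)).smul_right _).smul_right _
  have hcQ : Commute (cutoff n x m) (NormedSpace.exp z) := hcz.exp_right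
  unfold gzFlow
  rw [cutoff_mul_blk hQ, blk_mul_cutoff hQ']
  have step1 : cutoff n x m * cutoff n (NormedSpace.exp z) m
      = cutoff n (NormedSpace.exp z) m * cutoff n x m := by
    rw [← absorbR hQ hxm, hcQ.eq, absorbL hQ hxm]
  rw [mul_assoc, step1, ← mul_assoc, ← blk_mul_cutoff hQ' (NormedSpace.exp z),
    exp_neg_mul_exp, one_cutoff_mul hxm]

lemma blkpow_gzFlow_eq {i m : ℕ} (him : i ≤ m) (k l : ℕ) (s : ℂ)
    (x : Matrix (Fin n) (Fin n) ℂ) :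
    blkpow n (gzFlow n m k s x) i l = blkpow n x i l := by
  unfold blkpow
  rw [show cutoff n (gzFlow n m k s x) i = cutoff n x i from by
    rw [← cutoff_cutoff him (gzFlow n m k s x), cutoff_gzFlow_self, cutoff_cutoff him]]

lemma cutoff_pow_mul (x : Matrix (Fin n) (Fin n) ℂ) (m l : ℕ) :
    cutoff n ((cutoff n x m) ^ l) m * cutoff n x m
      = cutoff n ((cutoff n x m) ^ (l + 1)) m := by
  cases l with
  | zero =>
    rw [pow_zero, pow_one, one_cutoff_mul (supp_cutoff x m),
      cutoff_eq_self (supp_cutoff x m)]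
  | succ l =>
    rw [cutoff_eq_self (supp_pow_succ (supp_cutoff x m) l),
      cutoff_eq_self (supp_pow_succ (supp_cutoff x m) (l + 1)), ← pow_succ]

/-- The `m×m` block powers transform by conjugation under the flow of `f_{i,j}`, `i ≤ m`. -/
lemma blkpow_gzFlow_conj {i m : ℕ} (him : i ≤ m) (j l : ℕ) (t : ℂ)
    (x : Matrix (Fin n) (Fin n) ℂ) :
    blkpow n (gzFlow n i j t x) m l =
      NormedSpace.exp (-(t • ((j : ℂ) • blkpow n x i (j - 1)))) * blkpow n x m l *
        NormedSpace.exp (t • ((j : ℂ) • blkpow n x i (j - 1))) := by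
  set z := t • ((j : ℂ) • blkpow n x i (j - 1)) with hz
  set P := NormedSpace.exp z with hPdef
  set P' := NormedSpace.exp (-z) with hP'def
  have hzsupp : Supp m z :=
    supp_mono him (supp_smul _ (supp_smul _ (supp_blkpow x i (j - 1))))
  have hP : Blk m P := blk_exp hzsupp
  have hP' : Blk m P' := blk_exp (supp_neg hzsupp)
  have hxm : Supp m (cutoff n x m) := supp_cutoff x m
  have hPP' : P * P' = 1 := exp_mul_exp_neg z
  have hP'P : P' * P = 1 := exp_neg_mul_exp z
  -- the cutoff of the flowed matrix
  have hcut : cutoff n (gzFlow n i j t x) m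
      = cutoff n P' m * cutoff n x m * cutoff n P m := by
    unfold gzFlow
    rw [← hz, ← hPdef, ← hP'def, cutoff_mul_blk hP, blk_mul_cutoff hP']
  have hysupp : Supp m (cutoff n P' m * cutoff n x m * cutoff n P m) :=
    supp_mul (supp_mul (supp_cutoff P' m) hxm) (supp_cutoff P m)
  have hcutPP' : cutoff n P m * cutoff n P' m
      = cutoff n (1 : Matrix (Fin n) (Fin n) ℂ) m := by
    rw [← blk_mul_cutoff hP P', hPP']
  have hcutP'P : cutoff n P' m * cutoff n P m
      = cutoff n (1 : Matrix (Fin n) (Fin n) ℂ) m := by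
    rw [← blk_mul_cutoff hP' P, hP'P]
  have hePP' : ∀ v : Matrix (Fin n) (Fin n) ℂ,
      cutoff n P m * (cutoff n P' m * v)
        = cutoff n (1 : Matrix (Fin n) (Fin n) ℂ) m * v := by
    intro v; rw [← mul_assoc, hcutPP']
  -- main induction
  have main : ∀ L : ℕ,
      cutoff n ((cutoff n P' m * cutoff n x m * cutoff n P m) ^ L) m
      = cutoff n P' m * cutoff n ((cutoff n x m) ^ L) m * cutoff n P m := by
    intro L
    induction L with
    | zero =>
      rw [pow_zero, pow_zero, mul_one_cutoff (supp_cutoff P' m), hcutP'P]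
    | succ L ih =>
      rw [pow_succ, cutoff_mul_supp hysupp, ih]
      simp only [mul_assoc]
      rw [hePP', one_cutoff_mul (supp_mul hxm (supp_cutoff P m)),
        ← mul_assoc (cutoff n ((cutoff n x m) ^ L) m) (cutoff n x m) (cutoff n P m),
        cutoff_pow_mul]
  have hres : blkpow n (gzFlow n i j t x) m l
      = cutoff n P' m * cutoff n ((cutoff n x m) ^ l) m * cutoff n P m := by
    unfold blkpow
    rw [hcut, main l]
  rw [hres]
  -- replace cutoffs by the full exponentials
  have hZ : Supp m (cutoff n ((cutoff n x m) ^ l) m) := supp_cutoff _ m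
  have h1 : cutoff n ((cutoff n x m) ^ l) m * cutoff n P m
      = cutoff n ((cutoff n x m) ^ l) m * P := (absorbR hP hZ).symm
  have h2 : Supp m (cutoff n ((cutoff n x m) ^ l) m * P) := by
    rw [absorbR hP hZ]; exact supp_mul hZ (supp_cutoff P m)
  rw [mul_assoc, h1, ← absorbL hP' h2, ← mul_assoc]
  rfl

lemma key {i m : ℕ} (him : i ≤ m) (j k : ℕ) (t s : ℂ) (x : Matrix (Fin n) (Fin n) ℂ) :
    gzFlow n i j t (gzFlow n m k s x) = gzFlow n m k s (gzFlow n i j t x) := by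
  set z := t • ((j : ℂ) • blkpow n x i (j - 1)) with hzdef
  set w := s • ((k : ℂ) • blkpow n x m (k - 1)) with hwdef
  set P := NormedSpace.exp z with hPdef
  set P' := NormedSpace.exp (-z) with hP'def
  set Q := NormedSpace.exp w with hQdef
  set Q' := NormedSpace.exp (-w) with hQ'def
  have hPP' : P * P' = 1 := exp_mul_exp_neg z
  have hP'P : P' * P = 1 := exp_neg_mul_exp z
  -- the unit given by P'
  have hu : ∀ A : Matrix (Fin n) (Fin n) ℂ,
      NormedSpace.exp (P' * A * P) = P' * NormedSpace.exp A * P := by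
    intro A
    let U : (Matrix (Fin n) (Fin n) ℂ)ˣ := ⟨P', P, hP'P, hPP'⟩
    exact Matrix.exp_units_conj U A
  -- LHS
  have hL : gzFlow n i j t (gzFlow n m k s x) = P' * (Q' * x * Q) * P := by
    show NormedSpace.exp (-(t • ((j : ℂ) •
        blkpow n (gzFlow n m k s x) i (j - 1)))) * (gzFlow n m k s x) *
        NormedSpace.exp (t • ((j : ℂ) • blkpow n (gzFlow n m k s x) i (j - 1)))
        = _
    rw [blkpow_gzFlow_eq him k (j - 1) s x]
    rfl
  -- RHS
  have hB : (s • ((k : ℂ) • blkpow n (gzFlow n i j t x) m (k - 1))) = P' * w * P := by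
    rw [blkpow_gzFlow_conj him j (k - 1) t x, ← hzdef, ← hPdef, ← hP'def, hwdef]
    simp only [Matrix.mul_smul, Matrix.smul_mul]
  have hR : gzFlow n m k s (gzFlow n i j t x)
      = (P' * Q' * P) * (P' * x * P) * (P' * Q * P) := by
    show NormedSpace.exp (-(s • ((k : ℂ) •
        blkpow n (gzFlow n i j t x) m (k - 1)))) * (gzFlow n i j t x) *
        NormedSpace.exp (s • ((k : ℂ) • blkpow n (gzFlow n i j t x) m (k - 1))) = _
    rw [hB]
    have hnegB : -(P' * w * P) = P' * (-w) * P := by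
      simp [Matrix.neg_mul, Matrix.mul_neg]
    rw [hnegB, hu (-w), hu w]
    rfl
  rw [hL, hR]
  have cancel : ∀ y : Matrix (Fin n) (Fin n) ℂ, P * (P' * y) = y := by
    intro y; rw [← mul_assoc, hPP', one_mul]
  simp only [mul_assoc, cancel]

end GZaux

/-- The flows associated to `f_{i,j}(x) = tr((x_i)^j)` and `f_{m,k}(x) = tr((x_m)^k)`
commute: applying them in either order to any `x ∈ gl(n,ℂ)` gives the same result. -/
theorem gzFlows_commute (n i m j k : ℕ) (hi : i < n) (hm : m < n)
    (hj : 1 ≤ j) (hk : 1 ≤ k) (t s : ℂ) (x : Matrix (Fin n) (Fin n) ℂ) :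
    gzFlow n i j t (gzFlow n m k s x) = gzFlow n m k s (gzFlow n i j t x) := by
  rcases le_total i m with h | h
  · exact GZaux.key h j k t s x
  · exact (GZaux.key h k j s t x).symm
end

section
/- Let x ∈ gl(n,ℂ) be such that for every 1 ≤ i ≤ n-1, the centralizers satisfy z_{gl(i)}(x_i) ∩ z_{gl(i+1)}(x_{i+1}) = 0 (where gl(i) embeds in gl(i+1) as top-left block). Then the sum ∑_{i=1}^{n} z_{gl(i)}(x_i) inside gl(n,ℂ) is direct. -/
open Matrix

/-- `z` is a member of the centralizer `z_{gl(i)}(x_i)` of `x_i` in `gl(i)`,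
regarded as a subspace of `gl(n)` via the top-left block embedding:
`z` is supported in the top-left `i×i` block and commutes with `x_i`. -/
def memCent (n : ℕ) (x : Matrix (Fin n) (Fin n) ℂ) (i : ℕ)
    (z : Matrix (Fin n) (Fin n) ℂ) : Prop :=
  (∀ a b : Fin n, ¬((a : ℕ) < i ∧ (b : ℕ) < i) → z a b = 0) ∧
    z * cutoff n x i = cutoff n x i * z

lemma comm_restrict (n : ℕ) (x z : Matrix (Fin n) (Fin n) ℂ) (i j : ℕ) (hij : i ≤ j)
    (hs : ∀ a b : Fin n, ¬((a : ℕ) < i ∧ (b : ℕ) < i) → z a b = 0)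
    (hc : z * cutoff n x j = cutoff n x j * z) :
    z * cutoff n x i = cutoff n x i * z := by
  ext a b
  by_cases ha : (a : ℕ) < i
  · by_cases hb : (b : ℕ) < i
    · have h1 : (z * cutoff n x i) a b = (z * cutoff n x j) a b := by
        simp only [Matrix.mul_apply, cutoff, Matrix.of_apply]
        refine Finset.sum_congr rfl fun c _ => ?_
        by_cases hc' : (c : ℕ) < i
        · simp [hc', hb, lt_of_lt_of_le hc' hij, lt_of_lt_of_le hb hij]
        · have := hs a c (by tauto); simp [this]
      have h2 : (cutoff n x i * z) a b = (cutoff n x j * z) a b := by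
        simp only [Matrix.mul_apply, cutoff, Matrix.of_apply]
        refine Finset.sum_congr rfl fun c _ => ?_
        by_cases hc' : (c : ℕ) < i
        · simp [hc', ha, lt_of_lt_of_le hc' hij, lt_of_lt_of_le ha hij]
        · have := hs c b (by tauto); simp [this]
      rw [h1, h2, hc]
    · have h1 : (z * cutoff n x i) a b = 0 := by
        simp only [Matrix.mul_apply, cutoff, Matrix.of_apply]
        exact Finset.sum_eq_zero fun c _ => by simp [hb]
      have h2 : (cutoff n x i * z) a b = 0 := by
        simp only [Matrix.mul_apply, cutoff, Matrix.of_apply]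
        exact Finset.sum_eq_zero fun c _ => by have := hs c b (by tauto); simp [this]
      rw [h1, h2]
  · have h1 : (z * cutoff n x i) a b = 0 := by
      simp only [Matrix.mul_apply, cutoff, Matrix.of_apply]
      exact Finset.sum_eq_zero fun c _ => by have := hs a c (by tauto); simp [this]
    have h2 : (cutoff n x i * z) a b = 0 := by
      simp only [Matrix.mul_apply, cutoff, Matrix.of_apply]
      exact Finset.sum_eq_zero fun c _ => by simp [ha]
    rw [h1, h2]

/-- If for every `1 ≤ i ≤ n-1` the centralizers satisfy
`z_{gl(i)}(x_i) ∩ z_{gl(i+1)}(x_{i+1}) = 0`, then the sum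
`∑_{i=1}^{n} z_{gl(i)}(x_i)` inside `gl(n,ℂ)` is direct: the only way to write
`0` as a sum of elements of the centralizers is with all summands zero. -/
theorem centralizer_sum_direct (n : ℕ) (x : Matrix (Fin n) (Fin n) ℂ)
    (hint : ∀ i ∈ Finset.Icc 1 (n - 1), ∀ z : Matrix (Fin n) (Fin n) ℂ,
      memCent n x i z → memCent n x (i + 1) z → z = 0) :
    ∀ f : ℕ → Matrix (Fin n) (Fin n) ℂ,
      (∀ i ∈ Finset.Icc 1 n, memCent n x i (f i)) →
      (∑ i ∈ Finset.Icc 1 n, f i) = 0 →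
      ∀ i ∈ Finset.Icc 1 n, f i = 0 := by
  intro f hf hsum
  suffices H : ∀ k, k ≤ n → (∑ i ∈ Finset.Icc 1 k, f i) = 0 →
      ∀ i ∈ Finset.Icc 1 k, f i = 0 from H n le_rfl hsum
  intro k
  induction k with
  | zero => intro _ _ i hi; simp at hi
  | succ k ih =>
    intro hk1 hs i hi
    have hsplit : (∑ i ∈ Finset.Icc 1 k, f i) + f (k + 1) = 0 := by
      rw [← Finset.sum_Icc_succ_top (by omega : 1 ≤ k + 1)]; exact hs
    rcases Nat.eq_zero_or_pos k with hk0 | hkpos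
    · subst hk0
      have h1 : f 1 = 0 := by simpa using hsplit
      have : i = 1 := by simp [Finset.mem_Icc] at hi; omega
      rw [this]; exact h1
    · -- f (k+1) is supported in the k×k block
      have hsupp : ∀ a b : Fin n, ¬((a : ℕ) < k ∧ (b : ℕ) < k) → f (k + 1) a b = 0 := by
        intro a b hab
        have : f (k + 1) = -(∑ i ∈ Finset.Icc 1 k, f i) := by
          rw [eq_neg_iff_add_eq_zero, add_comm]; exact hsplit
        rw [this]
        simp only [Matrix.neg_apply, Matrix.sum_apply, neg_eq_zero]
        refine Finset.sum_eq_zero fun j hj => ?_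
        simp only [Finset.mem_Icc] at hj
        exact (hf j (Finset.mem_Icc.mpr ⟨hj.1, hj.2.trans (by omega)⟩)).1 a b
          (fun h => hab ⟨lt_of_lt_of_le h.1 hj.2, lt_of_lt_of_le h.2 hj.2⟩)
      have hmemk1 : memCent n x (k + 1) (f (k + 1)) :=
        hf (k + 1) (Finset.mem_Icc.mpr ⟨by omega, hk1⟩)
      have hmemk : memCent n x k (f (k + 1)) :=
        ⟨hsupp, comm_restrict n x (f (k + 1)) k (k + 1) (by omega) hsupp hmemk1.2⟩
      have hzero : f (k + 1) = 0 :=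
        hint k (Finset.mem_Icc.mpr ⟨hkpos, by omega⟩) (f (k + 1)) hmemk hmemk1
      have hsk : (∑ i ∈ Finset.Icc 1 k, f i) = 0 := by
        rw [hzero, add_zero] at hsplit; exact hsplit
      simp only [Finset.mem_Icc] at hi
      rcases Nat.lt_or_ge i (k + 1) with h | h
      · exact ih (by omega) hsk i (Finset.mem_Icc.mpr ⟨hi.1, by omega⟩)
      · have : i = k + 1 := by omega
        rw [this]; exact hzero
end

section
/- Let z_{i1},...,z_{im} be nonzero elements with z_{ij} ∈ gl(i_j) embedded in gl(n,ℂ) for an increasing sequence i_1 < ... < i_m ≤ n, such that each z_{ij} centralizes x_{i_j} and ∑_j z_{ij} = 0. Then z_{i1} centralizes x_{i_1+1}; that is, z_{i1} ∈ z_{gl(i_1)}(x_{i_1}) ∩ z_{gl(i_1+1)}(x_{i_1+1}). -/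
open Matrix

/-- Let `i_1 < i_2 < ⋯ < i_m ≤ n` and let `z_j ∈ gl(i_j) ⊆ gl(n,ℂ)` be nonzero
elements with `[z_j, x_{i_j}] = 0` and `∑_j z_j = 0`.  Then `z_1` also
centralizes `x_{i_1 + 1}`; i.e. `z_1 ∈ z_{gl(i_1)}(x_{i_1}) ∩ z_{gl(i_1+1)}(x_{i_1+1})`. -/
theorem first_summand_centralizes_next (n m : ℕ) (hm : 0 < m)
    (idx : Fin m → ℕ) (hmono : StrictMono idx) (hle : ∀ j, idx j ≤ n)
    (x : Matrix (Fin n) (Fin n) ℂ)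
    (z : Fin m → Matrix (Fin n) (Fin n) ℂ)
    (hne : ∀ j, z j ≠ 0)
    (hsupp : ∀ j, ∀ a b : Fin n, ¬((a : ℕ) < idx j ∧ (b : ℕ) < idx j) → z j a b = 0)
    (hcent : ∀ j, z j * cutoff n x (idx j) = cutoff n x (idx j) * z j)
    (hsum : (∑ j, z j) = 0) :
    z ⟨0, hm⟩ * cutoff n x (idx ⟨0, hm⟩ + 1) = cutoff n x (idx ⟨0, hm⟩ + 1) * z ⟨0, hm⟩ := by
  set j0 : Fin m := ⟨0, hm⟩ with hj0
  rcases eq_or_lt_of_le (hle j0) with hin | hi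
  · -- degenerate case `idx j0 = n` : the two cutoffs coincide
    have hcc : cutoff n x (idx j0 + 1) = cutoff n x (idx j0) := by
      ext a b
      have ha := a.isLt
      have hb := b.isLt
      simp only [cutoff, of_apply]
      rw [if_pos (by omega), if_pos (by omega)]
    rw [hcc]
    exact hcent j0
  · set i := idx j0 with hidef
    set b0 : Fin n := ⟨i, hi⟩ with hb0
    have hb0v : (b0 : ℕ) = i := rfl
    have hilt : ∀ j : Fin m, j ≠ j0 → i < idx j := by
      intro j hj
      refine hmono ?_
      have : 0 < (j : ℕ) := Nat.pos_of_ne_zero fun h => hj (Fin.ext h)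
      exact this
    have hzsum : ∑ j ∈ Finset.univ.erase j0, z j = - z j0 := by
      have h := Finset.add_sum_erase Finset.univ z (Finset.mem_univ j0)
      rw [hsum] at h
      exact eq_neg_of_add_eq_zero_right h
    -- entrywise version of `hzsum`
    have hzsum' : ∀ a b : Fin n,
        ∑ j ∈ Finset.univ.erase j0, z j a b = - z j0 a b := by
      intro a b
      rw [← Matrix.sum_apply, hzsum, Matrix.neg_apply]
    -- the column of `x` at index `i` is annihilated by `z j0` acting on the left
    have hcol : ∀ a : Fin n, (a : ℕ) < i → ∑ c, z j0 a c * x c b0 = 0 := by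
      intro a ha
      have hs : ∑ j ∈ Finset.univ.erase j0, ∑ c, z j a c * x c b0
          = ∑ j ∈ Finset.univ.erase j0, ∑ c, x a c * z j c b0 := by
        refine Finset.sum_congr rfl fun j hj => ?_
        have hij : i < idx j := hilt j (Finset.ne_of_mem_erase hj)
        have h := congrArg (fun M => M a b0) (hcent j)
        simp only [mul_apply] at h
        have h1 : ∑ c, z j a c * cutoff n x (idx j) c b0 = ∑ c, z j a c * x c b0 := by
          refine Finset.sum_congr rfl fun c _ => ?_
          by_cases hc : (c : ℕ) < idx j
          · simp [cutoff, hc, hb0v, hij]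
          · rw [hsupp j a c (by tauto)]; ring
        have h2 : ∑ c, cutoff n x (idx j) a c * z j c b0 = ∑ c, x a c * z j c b0 := by
          refine Finset.sum_congr rfl fun c _ => ?_
          by_cases hc : (c : ℕ) < idx j
          · simp [cutoff, hc, lt_trans ha hij]
          · rw [hsupp j c b0 (by tauto)]; ring
        rw [h1, h2] at h
        exact h
      have hL : ∑ j ∈ Finset.univ.erase j0, ∑ c, z j a c * x c b0
          = - ∑ c, z j0 a c * x c b0 := by
        rw [Finset.sum_comm, ← Finset.sum_neg_distrib]
        refine Finset.sum_congr rfl fun c _ => ?_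
        rw [← Finset.sum_mul, hzsum' a c, neg_mul]
      have hR : ∑ j ∈ Finset.univ.erase j0, ∑ c, x a c * z j c b0 = 0 := by
        rw [Finset.sum_comm]
        refine Finset.sum_eq_zero fun c _ => ?_
        rw [← Finset.mul_sum, hzsum' c b0,
          hsupp j0 c b0 (by rw [hb0v]; omega), neg_zero, mul_zero]
      have := hL.symm.trans (hs.trans hR)
      exact neg_eq_zero.mp this
    -- the row of `x` at index `i` is annihilated by `z j0` acting on the right
    have hrow : ∀ b : Fin n, (b : ℕ) < i → ∑ c, x b0 c * z j0 c b = 0 := by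
      intro b hb
      have hs : ∑ j ∈ Finset.univ.erase j0, ∑ c, z j b0 c * x c b
          = ∑ j ∈ Finset.univ.erase j0, ∑ c, x b0 c * z j c b := by
        refine Finset.sum_congr rfl fun j hj => ?_
        have hij : i < idx j := hilt j (Finset.ne_of_mem_erase hj)
        have h := congrArg (fun M => M b0 b) (hcent j)
        simp only [mul_apply] at h
        have h1 : ∑ c, z j b0 c * cutoff n x (idx j) c b = ∑ c, z j b0 c * x c b := by
          refine Finset.sum_congr rfl fun c _ => ?_
          by_cases hc : (c : ℕ) < idx j
          · simp [cutoff, hc, lt_trans hb hij]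
          · rw [hsupp j b0 c (by tauto)]; ring
        have h2 : ∑ c, cutoff n x (idx j) b0 c * z j c b = ∑ c, x b0 c * z j c b := by
          refine Finset.sum_congr rfl fun c _ => ?_
          by_cases hc : (c : ℕ) < idx j
          · simp [cutoff, hc, hb0v, hij]
          · rw [hsupp j c b (by tauto)]; ring
        rw [h1, h2] at h
        exact h
      have hL : ∑ j ∈ Finset.univ.erase j0, ∑ c, z j b0 c * x c b = 0 := by
        rw [Finset.sum_comm]
        refine Finset.sum_eq_zero fun c _ => ?_
        rw [← Finset.sum_mul, hzsum' b0 c,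
          hsupp j0 b0 c (by rw [hb0v]; omega), neg_zero, zero_mul]
      have hR : ∑ j ∈ Finset.univ.erase j0, ∑ c, x b0 c * z j c b
          = - ∑ c, x b0 c * z j0 c b := by
        rw [Finset.sum_comm, ← Finset.sum_neg_distrib]
        refine Finset.sum_congr rfl fun c _ => ?_
        rw [← Finset.mul_sum, hzsum' c b, mul_neg]
      have := hR.symm.trans (hs.symm.trans hL)
      exact neg_eq_zero.mp this
    -- now prove the commutation with `cutoff (i+1)` entrywise
    ext a b
    rw [Matrix.mul_apply, Matrix.mul_apply]
    by_cases ha : (a : ℕ) < i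
    · by_cases hb : (b : ℕ) < i
      · -- interior block : reduces to commutation with `cutoff i`
        have h := congrArg (fun M => M a b) (hcent j0)
        simp only [mul_apply] at h
        calc ∑ c, z j0 a c * cutoff n x (i + 1) c b
            = ∑ c, z j0 a c * cutoff n x i c b := by
              refine Finset.sum_congr rfl fun c _ => ?_
              by_cases hc : (c : ℕ) < i
              · simp [cutoff, hc, hb, Nat.lt_succ_of_lt]; intro h; exact absurd (h (by omega)) (by omega)
              · rw [hsupp j0 a c (by tauto)]; ring
          _ = ∑ c, cutoff n x i a c * z j0 c b := h
          _ = ∑ c, cutoff n x (i + 1) a c * z j0 c b := by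
              refine Finset.sum_congr rfl fun c _ => ?_
              by_cases hc : (c : ℕ) < i
              · simp [cutoff, hc, ha, Nat.lt_succ_of_lt]; intro h; exact absurd (h (by omega)) (by omega)
              · rw [hsupp j0 c b (by tauto)]; ring
      · rcases eq_or_lt_of_le (not_lt.mp hb) with hbi | hbi
        · -- `b` is the new column, index `i`
          have hbb : b = b0 := Fin.ext hbi.symm
          subst hbb
          have hLHS : ∑ c, z j0 a c * cutoff n x (i + 1) c b0
              = ∑ c, z j0 a c * x c b0 := by
            refine Finset.sum_congr rfl fun c _ => ?_
            by_cases hc : (c : ℕ) < i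
            · simp [cutoff, hc, hb0v, Nat.lt_succ_of_lt, Nat.lt_succ_self]; intro h; exact absurd h (by omega)
            · rw [hsupp j0 a c (by tauto)]; ring
          rw [hLHS, hcol a ha]
          refine (Finset.sum_eq_zero fun c _ => ?_).symm
          rw [hsupp j0 c b0 (by rw [hb0v]; omega), mul_zero]
        · -- `b` beyond the cutoff : both sides vanish
          have hLHS : ∑ c, z j0 a c * cutoff n x (i + 1) c b = 0 := by
            refine Finset.sum_eq_zero fun c _ => ?_
            have : ¬ ((c : ℕ) < i + 1 ∧ (b : ℕ) < i + 1) := by omega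
            simp [cutoff, this]; intro h1 h2; exact (this ⟨by omega, by omega⟩).elim
          rw [hLHS]
          refine (Finset.sum_eq_zero fun c _ => ?_).symm
          rw [hsupp j0 c b (by omega), mul_zero]
    · -- `a ≥ i` : left side vanishes
      have hLHS : ∑ c, z j0 a c * cutoff n x (i + 1) c b = 0 := by
        refine Finset.sum_eq_zero fun c _ => ?_
        rw [hsupp j0 a c (by omega), zero_mul]
      rw [hLHS]
      rcases eq_or_lt_of_le (not_lt.mp ha) with hai | hai
      · -- `a` is the new row, index `i`
        have haa : a = b0 := Fin.ext hai.symm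
        subst haa
        by_cases hb : (b : ℕ) < i
        · have hRHS : ∑ c, cutoff n x (i + 1) b0 c * z j0 c b
              = ∑ c, x b0 c * z j0 c b := by
            refine Finset.sum_congr rfl fun c _ => ?_
            by_cases hc : (c : ℕ) < i
            · simp [cutoff, hc, hb0v, Nat.lt_succ_of_lt, Nat.lt_succ_self]; intro h; exact absurd h (by omega)
            · rw [hsupp j0 c b (by tauto)]; ring
          rw [hRHS, hrow b hb]
        · refine (Finset.sum_eq_zero fun c _ => ?_).symm
          rw [hsupp j0 c b (by omega), mul_zero]
      · -- `a` beyond the cutoff : right side vanishes too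
        refine (Finset.sum_eq_zero fun c _ => ?_).symm
        have : ¬ ((a : ℕ) < i + 1 ∧ (c : ℕ) < i + 1) := by omega
        simp [cutoff, this]; intro h1 h2; exact (this ⟨by omega, by omega⟩).elim
end

section
/- Let h = ⊕_{i=1}^{l} a_i J ∈ so(2l,ℂ) with J = [[0,1],[-1,0]], and let Y ∈ so(2l+1,ℂ) have h as top-left 2l×2l block, last column (z_{11}, z_{12}, ..., z_{l1}, z_{l2}, 0)ᵀ and last row its negative transpose. Then det(t·I - Y) = t·[∏_{i=1}^{l}(t² + a_i²) + ∑_{i=1}^{l}(z_{i1}² + z_{i2}²) ∏_{j≠i}(t² + a_j²)]. -/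
open Matrix Polynomial

/-- The bordered skew-symmetric matrix `Y ∈ so(2l+1,ℂ)` whose top-left `2l×2l`
block is `h = ⊕ᵢ aᵢ·J` (`J = [[0,1],[-1,0]]`), whose last column is
`(z_{11}, z_{12}, …, z_{l1}, z_{l2}, 0)ᵀ` (encoded by `w : Fin (2l) → ℂ`,
`w(2i) = z_{i+1,1}`, `w(2i+1) = z_{i+1,2}`), and whose last row is the
negative transpose. -/
def YB (l : ℕ) (a : Fin l → ℂ) (w : Fin (2 * l) → ℂ) :
    Matrix (Fin (2 * l + 1)) (Fin (2 * l + 1)) ℂ :=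
  Matrix.of fun p q =>
    if h1 : (q : ℕ) = (p : ℕ) + 1 ∧ (p : ℕ) % 2 = 0 ∧ (q : ℕ) < 2 * l then
      a ⟨(p : ℕ) / 2, by omega⟩
    else if h2 : (p : ℕ) = (q : ℕ) + 1 ∧ (q : ℕ) % 2 = 0 ∧ (p : ℕ) < 2 * l then
      -a ⟨(q : ℕ) / 2, by omega⟩
    else if h3 : (q : ℕ) = 2 * l ∧ (p : ℕ) < 2 * l then w ⟨(p : ℕ), by omega⟩
    else if h4 : (p : ℕ) = 2 * l ∧ (q : ℕ) < 2 * l then -w ⟨(q : ℕ), by omega⟩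
    else 0

def eYB (l : ℕ) : Fin 2 × Fin l ≃ Fin (2 * l) :=
  (Equiv.prodComm _ _).trans (finProdFinEquiv.trans (finCongr (by ring)))

lemma eYB_val {l : ℕ} (r : Fin 2) (i : Fin l) :
    ((eYB l (r, i)) : ℕ) = 2 * (i : ℕ) + (r : ℕ) := by
  simp [eYB, finProdFinEquiv]
  omega

def gYB (l : ℕ) : (Fin 2 × Fin l) ⊕ Fin 1 ≃ Fin (2 * l + 1) :=
  (Equiv.sumCongr (eYB l) (Equiv.refl _)).trans finSumFinEquiv

lemma gYB_inl {l : ℕ} (x : Fin 2 × Fin l) :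
    ((gYB l (Sum.inl x)) : ℕ) = ((eYB l x) : ℕ) := by
  simp [gYB]

lemma gYB_inr {l : ℕ} (y : Fin 1) : ((gYB l (Sum.inr y)) : ℕ) = 2 * l := by
  simp [gYB]

noncomputable def A2 (t x : ℂ) : Matrix (Fin 2) (Fin 2) ℂ := !![t, -x; x, t]
noncomputable def N2 (t x : ℂ) : Matrix (Fin 2) (Fin 2) ℂ :=
  (t ^ 2 + x ^ 2)⁻¹ • !![t, x; -x, t]

lemma A2_mul_N2 (t x : ℂ) (h : t ^ 2 + x ^ 2 ≠ 0) : A2 t x * N2 t x = 1 := by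
  ext i j
  fin_cases i <;> fin_cases j <;>
      simp [A2, N2, Matrix.mul_apply, Fin.sum_univ_two, Matrix.one_apply] <;>
    field_simp <;> ring

lemma N2_mul_A2 (t x : ℂ) (h : t ^ 2 + x ^ 2 ≠ 0) : N2 t x * A2 t x = 1 := by
  ext i j
  fin_cases i <;> fin_cases j <;>
      simp [A2, N2, Matrix.mul_apply, Fin.sum_univ_two, Matrix.one_apply] <;>
    field_simp <;> ring

set_option maxHeartbeats 8000000 in
lemma YB_key (l : ℕ) (a : Fin l → ℂ) (w : Fin (2 * l) → ℂ) (t : ℂ) :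
    ((t • (1 : Matrix (Fin (2 * l + 1)) (Fin (2 * l + 1)) ℂ)) - YB l a w).submatrix
        (gYB l) (gYB l) =
      fromBlocks (blockDiagonal fun i => A2 t (a i))
        (Matrix.of fun p (_ : Fin 1) => -w (eYB l p))
        (Matrix.of fun (_ : Fin 1) q => w (eYB l q))
        (Matrix.of fun _ _ => t) := by
  ext p q
  rcases p with (⟨r, i⟩ | p) <;> rcases q with (⟨s, j⟩ | q)
  · have hil := i.isLt
    have hjl := j.isLt
    obtain ⟨r, hr⟩ := r
    obtain ⟨s, hs⟩ := s
    have hp : gYB l (Sum.inl (⟨r, hr⟩, i)) = ⟨2 * (i : ℕ) + r, by omega⟩ := by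
      apply Fin.ext; rw [gYB_inl, eYB_val]
    have hq : gYB l (Sum.inl (⟨s, hs⟩, j)) = ⟨2 * (j : ℕ) + s, by omega⟩ := by
      apply Fin.ext; rw [gYB_inl, eYB_val]
    simp only [submatrix_apply, fromBlocks_apply₁₁, Matrix.sub_apply, Matrix.smul_apply,
      smul_eq_mul, YB, Matrix.of_apply, blockDiagonal_apply, hp, hq]
    clear hp hq
    rcases eq_or_ne i j with h | h
    · subst h
      interval_cases r <;> interval_cases s
      · rw [Matrix.one_apply_eq, if_pos rfl, dif_neg (by omega), dif_neg (by omega),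
          dif_neg (by omega), dif_neg (by omega)]
        simp [A2]
      · rw [Matrix.one_apply_ne (by simp only [ne_eq, Fin.mk.injEq]; omega), if_pos rfl,
          dif_pos (by omega)]
        simp [A2, Fin.mk_zero, Fin.mk_one]
        try exact congrArg a (Fin.ext (by simp; omega))
      · rw [Matrix.one_apply_ne (by simp only [ne_eq, Fin.mk.injEq]; omega), if_pos rfl,
          dif_neg (by omega), dif_pos (by omega)]
        simp [A2, Fin.mk_zero, Fin.mk_one]
        try exact congrArg a (Fin.ext (by simp; omega))
      · rw [Matrix.one_apply_eq, if_pos rfl, dif_neg (by omega), dif_neg (by omega),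
          dif_neg (by omega), dif_neg (by omega)]
        simp [A2]
    · have hv : (i : ℕ) ≠ (j : ℕ) := fun hh => h (Fin.ext hh)
      rw [Matrix.one_apply_ne (by simp only [ne_eq, Fin.mk.injEq]; omega), if_neg h,
        dif_neg (by omega), dif_neg (by omega), dif_neg (by omega), dif_neg (by omega)]
      ring
  · have hil := i.isLt
    have hr := r.isLt
    have hp : gYB l (Sum.inl (r, i)) = ⟨2 * (i : ℕ) + (r : ℕ), by omega⟩ := by
      apply Fin.ext; rw [gYB_inl, eYB_val]
    have hq : gYB l (Sum.inr q) = ⟨2 * l, by omega⟩ := by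
      apply Fin.ext; rw [gYB_inr]
    simp only [submatrix_apply, fromBlocks_apply₁₂, Matrix.sub_apply, Matrix.smul_apply,
      smul_eq_mul, YB, Matrix.of_apply, hp, hq]
    rw [Matrix.one_apply_ne (by simp only [ne_eq, Fin.mk.injEq]; omega), dif_neg (by omega),
      dif_neg (by omega), dif_pos (by exact ⟨trivial, by omega⟩)]
    rw [mul_zero, zero_sub]
    exact neg_inj.mpr (congrArg w (Fin.ext (by rw [eYB_val])))
  · have hjl := j.isLt
    have hs := s.isLt
    have hq : gYB l (Sum.inl (s, j)) = ⟨2 * (j : ℕ) + (s : ℕ), by omega⟩ := by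
      apply Fin.ext; rw [gYB_inl, eYB_val]
    have hp : gYB l (Sum.inr p) = ⟨2 * l, by omega⟩ := by
      apply Fin.ext; rw [gYB_inr]
    simp only [submatrix_apply, fromBlocks_apply₂₁, Matrix.sub_apply, Matrix.smul_apply,
      smul_eq_mul, YB, Matrix.of_apply, hp, hq]
    rw [Matrix.one_apply_ne (by simp only [ne_eq, Fin.mk.injEq]; omega), dif_neg (by omega),
      dif_neg (by omega), dif_neg (by omega), dif_pos (by exact ⟨trivial, by omega⟩)]
    rw [mul_zero, zero_sub, neg_neg]
    exact congrArg w (Fin.ext (by rw [eYB_val]))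
  · have hp : gYB l (Sum.inr p) = ⟨2 * l, by omega⟩ := by
      apply Fin.ext; rw [gYB_inr]
    have hq : gYB l (Sum.inr q) = ⟨2 * l, by omega⟩ := by
      apply Fin.ext; rw [gYB_inr]
    simp only [submatrix_apply, fromBlocks_apply₂₂, Matrix.sub_apply, Matrix.smul_apply,
      smul_eq_mul, YB, Matrix.of_apply, hp, hq]
    rw [Matrix.one_apply_eq, dif_neg (by omega), dif_neg (by omega), dif_neg (by omega),
      dif_neg (by omega)]
    ring

lemma BD_mul (l : ℕ) (a : Fin l → ℂ) (t : ℂ) (ha : ∀ i, t ^ 2 + a i ^ 2 ≠ 0) :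
    (blockDiagonal fun i => A2 t (a i)) * (blockDiagonal fun i => N2 t (a i)) = 1 := by
  rw [← blockDiagonal_mul,
    show (fun i => A2 t (a i) * N2 t (a i)) = (1 : Fin l → Matrix (Fin 2) (Fin 2) ℂ) from
      funext fun i => A2_mul_N2 _ _ (ha i), blockDiagonal_one]

lemma BD_mul' (l : ℕ) (a : Fin l → ℂ) (t : ℂ) (ha : ∀ i, t ^ 2 + a i ^ 2 ≠ 0) :
    (blockDiagonal fun i => N2 t (a i)) * (blockDiagonal fun i => A2 t (a i)) = 1 := by
  rw [← blockDiagonal_mul,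
    show (fun i => N2 t (a i) * A2 t (a i)) = (1 : Fin l → Matrix (Fin 2) (Fin 2) ℂ) from
      funext fun i => N2_mul_A2 _ _ (ha i), blockDiagonal_one]

lemma quad_sum (l : ℕ) (N : Fin l → Matrix (Fin 2) (Fin 2) ℂ) (v u : Fin 2 × Fin l → ℂ) :
    ∑ q : Fin 2 × Fin l, (∑ p : Fin 2 × Fin l, v p * blockDiagonal N p q) * u q =
      ∑ i : Fin l, (v (0, i) * N i 0 0 * u (0, i) + v (1, i) * N i 1 0 * u (0, i)
        + v (0, i) * N i 0 1 * u (1, i) + v (1, i) * N i 1 1 * u (1, i)) := by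
  simp only [Fintype.sum_prod_type, blockDiagonal_apply, mul_ite, mul_zero,
    Fin.sum_univ_two, Finset.sum_ite_eq', Finset.mem_univ, if_true]
  rw [← Finset.sum_add_distrib]
  congr 1
  funext j
  ring

lemma det_scalar (l : ℕ) (a : Fin l → ℂ) (w : Fin (2 * l) → ℂ) (t : ℂ)
    (ha : ∀ i, t ^ 2 + a i ^ 2 ≠ 0) :
    ((t • (1 : Matrix (Fin (2 * l + 1)) (Fin (2 * l + 1)) ℂ)) - YB l a w).det =
      t * ((∏ i, (t ^ 2 + a i ^ 2)) + ∑ i : Fin l,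
        (w (eYB l (0, i)) ^ 2 + w (eYB l (1, i)) ^ 2) *
          ∏ j ∈ Finset.univ.erase i, (t ^ 2 + a j ^ 2)) := by
  rw [← det_submatrix_equiv_self (gYB l), YB_key]
  letI : Invertible (blockDiagonal fun i => A2 t (a i)) :=
    ⟨blockDiagonal fun i => N2 t (a i), BD_mul' l a t ha, BD_mul l a t ha⟩
  rw [det_fromBlocks₁₁]
  have hinv : (⅟(blockDiagonal fun i => A2 t (a i)) : Matrix _ _ ℂ) =
      blockDiagonal fun i => N2 t (a i) := rfl
  rw [hinv, det_blockDiagonal]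
  have hdet2 : ∀ i : Fin l, (A2 t (a i)).det = t ^ 2 + a i ^ 2 := fun i => by
    rw [A2, Matrix.det_fin_two_of]; ring
  rw [Finset.prod_congr rfl fun i _ => hdet2 i]
  have h11 : ((Matrix.of fun (_ : Fin 1) (_ : Fin 1) => t) -
      (Matrix.of fun (_ : Fin 1) q => w (eYB l q)) *
      (blockDiagonal fun i => N2 t (a i)) * (Matrix.of fun p (_ : Fin 1) => -w (eYB l p))).det
      = t + ∑ i : Fin l, (t ^ 2 + a i ^ 2)⁻¹ * t *
          (w (eYB l (0, i)) ^ 2 + w (eYB l (1, i)) ^ 2) := by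
    rw [det_fin_one]
    simp only [Matrix.sub_apply, Matrix.of_apply, Matrix.mul_apply]
    rw [quad_sum l (fun i => N2 t (a i)) (fun p => w (eYB l p)) (fun q => -w (eYB l q))]
    have hterm : ∀ i : Fin l,
        (w (eYB l (0, i)) * (N2 t (a i)) 0 0 * (-w (eYB l (0, i))) +
          w (eYB l (1, i)) * (N2 t (a i)) 1 0 * (-w (eYB l (0, i))) +
          w (eYB l (0, i)) * (N2 t (a i)) 0 1 * (-w (eYB l (1, i))) +
          w (eYB l (1, i)) * (N2 t (a i)) 1 1 * (-w (eYB l (1, i))))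
        = -((t ^ 2 + a i ^ 2)⁻¹ * t *
            (w (eYB l (0, i)) ^ 2 + w (eYB l (1, i)) ^ 2)) := by
      intro i
      simp [N2]
      ring
    rw [Finset.sum_congr rfl fun i _ => hterm i, Finset.sum_neg_distrib]
    ring
  rw [h11, mul_add, Finset.mul_sum]
  have hkey : ∀ i ∈ Finset.univ, (∏ j : Fin l, (t ^ 2 + a j ^ 2)) *
      ((t ^ 2 + a i ^ 2)⁻¹ * t * (w (eYB l (0, i)) ^ 2 + w (eYB l (1, i)) ^ 2)) =
      t * ((w (eYB l (0, i)) ^ 2 + w (eYB l (1, i)) ^ 2) *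
        ∏ j ∈ Finset.univ.erase i, (t ^ 2 + a j ^ 2)) := by
    intro i _
    have hai := ha i
    rw [← Finset.mul_prod_erase Finset.univ _ (Finset.mem_univ i)]
    field_simp
  rw [Finset.sum_congr rfl hkey, mul_add, Finset.mul_sum]
  rw [mul_comm (∏ i : Fin l, (t ^ 2 + a i ^ 2)) t]

lemma eval_charpoly' {n : ℕ} (M : Matrix (Fin n) (Fin n) ℂ) (t : ℂ) :
    M.charpoly.eval t = ((t • (1 : Matrix (Fin n) (Fin n) ℂ)) - M).det := by
  rw [Matrix.charpoly, ← Polynomial.coe_evalRingHom, RingHom.map_det]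
  congr 1
  ext i j
  by_cases h : i = j <;>
    simp [Matrix.charmatrix_apply, Matrix.one_apply, h]

/-- `det(t·I - Y) = t·[∏ᵢ(t² + aᵢ²) + ∑ᵢ (z_{i1}² + z_{i2}²) ∏_{j≠i}(t² + a_j²)]`. -/
theorem YB_charpoly (l : ℕ) (a : Fin l → ℂ) (w : Fin (2 * l) → ℂ) :
    (YB l a w).charpoly =
      X * ((∏ i : Fin l, (X ^ 2 + C (a i) ^ 2)) +
        ∑ i : Fin l,
          C (w ⟨2 * (i : ℕ), by have := i.isLt; omega⟩ ^ 2 +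
              w ⟨2 * (i : ℕ) + 1, by have := i.isLt; omega⟩ ^ 2) *
            ∏ j ∈ Finset.univ.erase i, (X ^ 2 + C (a j) ^ 2)) := by
  have hinf : {x : ℂ | ∀ i, x ^ 2 + a i ^ 2 ≠ 0}.Infinite := by
    have hfin : ({x : ℂ | ∃ i : Fin l, x ^ 2 + a i ^ 2 = 0}).Finite := by
      have hsub : {x : ℂ | ∃ i : Fin l, x ^ 2 + a i ^ 2 = 0} ⊆
          ⋃ i : Fin l, {x : ℂ | ((X : ℂ[X]) ^ 2 + C (a i ^ 2)).IsRoot x} := by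
        rintro x ⟨i, hx⟩
        exact Set.mem_iUnion.mpr ⟨i, by simp [Polynomial.IsRoot, hx]⟩
      refine Set.Finite.subset (Set.finite_iUnion fun i =>
        Polynomial.finite_setOf_isRoot ?_) hsub
      exact (Polynomial.monic_X_pow_add_C _ (two_ne_zero)).ne_zero
    have hc : {x : ℂ | ∀ i, x ^ 2 + a i ^ 2 ≠ 0} =
        {x : ℂ | ∃ i : Fin l, x ^ 2 + a i ^ 2 = 0}ᶜ := by
      ext x; simp
    rw [hc]
    exact hfin.infinite_compl
  have hsub2 : {x : ℂ | ∀ i, x ^ 2 + a i ^ 2 ≠ 0} ⊆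
      {x : ℂ | eval x (YB l a w).charpoly =
        eval x (X * ((∏ i : Fin l, (X ^ 2 + C (a i) ^ 2)) +
          ∑ i : Fin l,
            C (w ⟨2 * (i : ℕ), by have := i.isLt; omega⟩ ^ 2 +
                w ⟨2 * (i : ℕ) + 1, by have := i.isLt; omega⟩ ^ 2) *
              ∏ j ∈ Finset.univ.erase i, (X ^ 2 + C (a j) ^ 2)))} := by
    intro t ht
    simp only [Set.mem_setOf_eq] at ht ⊢
    rw [eval_charpoly', det_scalar l a w t ht]
    have h0 : ∀ i : Fin l, eYB l (0, i) =
        (⟨2 * (i : ℕ), by have := i.isLt; omega⟩ : Fin (2 * l)) := fun i =>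
      Fin.ext (by rw [eYB_val]; simp)
    have h1 : ∀ i : Fin l, eYB l (1, i) =
        (⟨2 * (i : ℕ) + 1, by have := i.isLt; omega⟩ : Fin (2 * l)) := fun i =>
      Fin.ext (by rw [eYB_val]; simp)
    simp only [h0, h1, eval_mul, eval_add, eval_X, eval_pow, eval_C,
      Polynomial.eval_prod, Polynomial.eval_finset_sum]
  exact Polynomial.eq_of_infinite_eval_eq _ _ (hinf.mono hsub2)
end

section
/- The bordered skew-symmetric matrix X ∈ so(2l+2,ℂ) built from regular h = ⊕ a_i J ⊕ (0) (with a_i ≠ 0, a_i² ≠ a_j² for i ≠ j) with border entries satisfying z_{i1}² + z_{i2}² = ∏_j(b_j² - a_i²)/(-a_i² ∏_{j≠i}(a_j² - a_i²)) and z_{l+1}² = ∏_{i=1}^{l+1} b_i² / ∏_{i=1}^{l} a_i² has determinant z_{l+1}² ∏_{i=1}^{l} a_i², and hence its Pfaffian equals ±z_{l+1} ∏_{i=1}^{l} a_i; in particular by choosing the sign of z_{l+1} the Pfaffian can be made equal to either ∏_{i=1}^{l+1} b_i or -∏_{i=1}^{l+1} b_i. -/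
open Matrix

/-- The bordered skew-symmetric matrix `X ∈ so(2l+2,ℂ)` with top-left block
`h = ⊕ᵢ aᵢ·J ⊕ (0)`, last column `(z_{11},…,z_{l2}, z_{l+1}, 0)ᵀ` (encoded by
`w : Fin (2l+1) → ℂ`, `w(2l) = z_{l+1}`) and last row the negative transpose. -/
def XD (l : ℕ) (a : Fin l → ℂ) (w : Fin (2 * l + 1) → ℂ) :
    Matrix (Fin (2 * l + 2)) (Fin (2 * l + 2)) ℂ :=
  Matrix.of fun p q =>
    if h1 : (q : ℕ) = (p : ℕ) + 1 ∧ (p : ℕ) % 2 = 0 ∧ (p : ℕ) < 2 * l then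
      a ⟨(p : ℕ) / 2, by omega⟩
    else if h2 : (p : ℕ) = (q : ℕ) + 1 ∧ (q : ℕ) % 2 = 0 ∧ (q : ℕ) < 2 * l then
      -a ⟨(q : ℕ) / 2, by omega⟩
    else if h3 : (q : ℕ) = 2 * l + 1 ∧ (p : ℕ) < 2 * l + 1 then w ⟨(p : ℕ), by omega⟩
    else if h4 : (p : ℕ) = 2 * l + 1 ∧ (q : ℕ) < 2 * l + 1 then -w ⟨(q : ℕ), by omega⟩
    else 0

/-- Reindexing equivalence: pairs `(j,i) ↦ 2i+j`, border indices `k ↦ 2l+k`. -/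
def eD (l : ℕ) : (Fin 2 × Fin l) ⊕ Fin 2 ≃ Fin (2 * l + 2) where
  toFun x :=
    match x with
    | .inl (j, i) => ⟨2 * (i : ℕ) + (j : ℕ), by have := j.isLt; have := i.isLt; omega⟩
    | .inr k => ⟨2 * l + (k : ℕ), by have := k.isLt; omega⟩
  invFun p :=
    if h : (p : ℕ) < 2 * l then
      .inl (⟨(p : ℕ) % 2, by omega⟩, ⟨(p : ℕ) / 2, by omega⟩)
    else .inr ⟨(p : ℕ) - 2 * l, by have := p.isLt; omega⟩
  left_inv := by
    rintro (⟨j, i⟩ | k)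
    · have hj := j.isLt; have hi := i.isLt
      dsimp only
      rw [dif_pos (by omega)]
      simp only [Sum.inl.injEq, Prod.mk.injEq, Fin.ext_iff]
      constructor <;> omega
    · have hk := k.isLt
      dsimp only
      rw [dif_neg (by omega)]
      simp only [Sum.inr.injEq, Fin.ext_iff]
      omega
  right_inv := by
    intro p
    have hp := p.isLt
    by_cases h : (p : ℕ) < 2 * l
    · dsimp only
      rw [dif_pos h]
      simp only [Fin.ext_iff]
      omega
    · dsimp only
      rw [dif_neg h]
      simp only [Fin.ext_iff]
      omega

/-- For regular `h` (`aᵢ ≠ 0`, `aᵢ² ≠ a_j²` for `i ≠ j`) and generic target data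
`b₁,…,b_{l+1}`, if the border entries satisfy the solution-variety equations
`z_{i1}² + z_{i2}² = ∏ⱼ(b_j² - a_i²)/(-a_i² ∏_{j≠i}(a_j² - a_i²))` and
`z_{l+1}² = ∏ b_i² / ∏ a_i²`, then `det X = z_{l+1}² ∏ a_i²`; hence any square
root of `det X` (in particular the Pfaffian) equals `± z_{l+1} ∏ aᵢ`, and by
a choice of the sign of `z_{l+1}` the Pfaffian may be made equal to either
`∏ bᵢ` or `-∏ bᵢ`. -/
theorem XD_det_pfaffian (l : ℕ) (a : Fin l → ℂ) (b : Fin (l + 1) → ℂ)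
    (w : Fin (2 * l + 1) → ℂ)
    (ha0 : ∀ i, a i ≠ 0) (ha : ∀ i j, i ≠ j → a i ^ 2 ≠ a j ^ 2)
    (hb0 : ∀ i, b i ≠ 0) (hb : ∀ i j, i ≠ j → b i ^ 2 ≠ b j ^ 2)
    (hab : ∀ j k, b j ^ 2 ≠ a k ^ 2)
    (hz : ∀ i : Fin l,
      w ⟨2 * (i : ℕ), by have := i.isLt; omega⟩ ^ 2 +
          w ⟨2 * (i : ℕ) + 1, by have := i.isLt; omega⟩ ^ 2 =
        (∏ j, (b j ^ 2 - a i ^ 2)) /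
          (-(a i ^ 2) * ∏ j ∈ Finset.univ.erase i, (a j ^ 2 - a i ^ 2)))
    (hzl : w ⟨2 * l, by omega⟩ ^ 2 = (∏ i, b i ^ 2) / ∏ i, a i ^ 2) :
    (XD l a w).det = w ⟨2 * l, by omega⟩ ^ 2 * ∏ i, a i ^ 2 ∧
    (∀ pf : ℂ, pf ^ 2 = (XD l a w).det →
      pf = w ⟨2 * l, by omega⟩ * ∏ i, a i ∨
      pf = -(w ⟨2 * l, by omega⟩ * ∏ i, a i)) ∧
    (∃ zl : ℂ, zl ^ 2 = (∏ i, b i ^ 2) / ∏ i, a i ^ 2 ∧ zl * ∏ i, a i = ∏ i, b i) ∧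
    (∃ zl : ℂ, zl ^ 2 = (∏ i, b i ^ 2) / ∏ i, a i ^ 2 ∧ zl * ∏ i, a i = -∏ i, b i) := by
  set W : ℂ := w ⟨2 * l, by omega⟩ with hWdef
  have haprod : (∏ i, a i) ≠ 0 := Finset.prod_ne_zero_iff.mpr fun i _ => ha0 i
  have haprod2 : (∏ i, a i ^ 2) ≠ 0 :=
    Finset.prod_ne_zero_iff.mpr fun i _ => pow_ne_zero 2 (ha0 i)
  have hbprod2 : (∏ i, b i ^ 2) ≠ 0 :=
    Finset.prod_ne_zero_iff.mpr fun i _ => pow_ne_zero 2 (hb0 i)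
  have hW : W ≠ 0 := by
    intro h
    rw [h] at hzl
    have : (∏ i, b i ^ 2) = 0 := by
      have := hzl.symm
      rwa [div_eq_iff haprod2, zero_pow (by norm_num), zero_mul] at this
    exact hbprod2 this
  -- the blocks
  set A : Matrix (Fin 2 × Fin l) (Fin 2 × Fin l) ℂ :=
    Matrix.blockDiagonal (fun i : Fin l => !![(0 : ℂ), a i; -a i, 0]) with hA
  set B : Matrix (Fin 2 × Fin l) (Fin 2) ℂ :=
    Matrix.of (fun x k =>
      if k = (1 : Fin 2) then
        w ⟨2 * (x.2 : ℕ) + (x.1 : ℕ), by have := x.1.isLt; have := x.2.isLt; omega⟩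
      else 0) with hB
  set C : Matrix (Fin 2) (Fin 2 × Fin l) ℂ :=
    Matrix.of (fun k x =>
      if k = (1 : Fin 2) then
        -w ⟨2 * (x.2 : ℕ) + (x.1 : ℕ), by have := x.1.isLt; have := x.2.isLt; omega⟩
      else 0) with hC
  set D : Matrix (Fin 2) (Fin 2) ℂ := !![(0 : ℂ), W; -W, 0] with hD
  have hXblocks : (XD l a w).submatrix (eD l) (eD l) = Matrix.fromBlocks A B C D := by
    ext x y
    rcases x with ⟨j, i⟩ | k
    · have hj := j.isLt; have hi := i.isLt
      rcases y with ⟨j', i'⟩ | k'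
      · have hj' := j'.isLt; have hi' := i'.isLt
        simp only [submatrix_apply, fromBlocks_apply₁₁, hA, Matrix.blockDiagonal_apply,
          XD, eD, Equiv.coe_fn_mk, Matrix.of_apply]
        by_cases hii : i = i'
        · subst hii
          rw [if_pos rfl]
          fin_cases j <;> fin_cases j' <;>
            simp only [Fin.isValue, Fin.mk_zero, Fin.mk_one, Fin.val_zero, Fin.val_one,
              Matrix.cons_val', Matrix.cons_val_zero, Matrix.cons_val_one,
              Matrix.head_cons, Matrix.head_fin_const, Matrix.empty_val',
              Matrix.cons_val_fin_one, true_and, and_true, false_and, and_false, dite_true, dite_false, Nat.add_zero, add_zero] <;>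
            split_ifs with h1 h2 h3 h4 <;>
            first
            | rfl
            | omega
            | (congr 1; apply Fin.ext; simp only [Fin.ext_iff]; omega)
            | (rw [neg_inj]; congr 1; apply Fin.ext; simp only [Fin.ext_iff]; omega)
        · have hiv : (i : ℕ) ≠ (i' : ℕ) := fun h => hii (Fin.ext h)
          rw [if_neg hii]
          split_ifs with h1 h2 h3 h4 <;> first | rfl | omega
      · simp only [submatrix_apply, fromBlocks_apply₁₂, hB, XD, eD, Equiv.coe_fn_mk,
          Matrix.of_apply]
        fin_cases k' <;>
          simp only [Fin.isValue, Fin.mk_zero, Fin.mk_one, Fin.val_zero, Fin.val_one,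
            true_and, and_true, false_and, and_false, dite_true, dite_false, Nat.add_zero, add_zero] <;>
          [rw [if_neg (by decide)]; rw [if_pos (by trivial)]] <;>
          split_ifs with h1 h2 h3 h4 <;>
          first
          | rfl
          | omega
          | (congr 1; apply Fin.ext; simp only [Fin.ext_iff]; omega)
    · have hk := k.isLt
      rcases y with ⟨j', i'⟩ | k'
      · have hj' := j'.isLt; have hi' := i'.isLt
        simp only [submatrix_apply, fromBlocks_apply₂₁, hC, XD, eD, Equiv.coe_fn_mk,
          Matrix.of_apply]
        fin_cases k <;>
          simp only [Fin.isValue, Fin.mk_zero, Fin.mk_one, Fin.val_zero, Fin.val_one,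
            true_and, and_true, false_and, and_false, dite_true, dite_false, Nat.add_zero, add_zero] <;>
          [rw [if_neg (by decide)]; rw [if_pos (by trivial)]] <;>
          split_ifs with h1 h2 h3 h4 <;>
          first
          | rfl
          | omega
          | (rw [neg_inj]; congr 1; apply Fin.ext; simp only [Fin.ext_iff]; omega)
      · simp only [submatrix_apply, fromBlocks_apply₂₂, hD, XD, eD, Equiv.coe_fn_mk,
          Matrix.of_apply]
        fin_cases k <;> fin_cases k' <;>
          simp only [Fin.isValue, Fin.mk_zero, Fin.mk_one, Fin.val_zero, Fin.val_one,
            Matrix.cons_val', Matrix.cons_val_zero, Matrix.cons_val_one,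
            Matrix.head_cons, Matrix.head_fin_const, Matrix.empty_val',
            Matrix.cons_val_fin_one, true_and, and_true, false_and, and_false, dite_true, dite_false, Nat.add_zero, add_zero] <;>
          split_ifs with h1 h2 h3 h4 <;>
          first
          | rfl
          | omega
          | (rw [hWdef]; congr 1; apply Fin.ext; simp only [Fin.ext_iff]; omega)
          | (rw [hWdef, neg_inj]; congr 1; apply Fin.ext; simp only [Fin.ext_iff]; omega)
  have hdetA : A.det = ∏ i, a i ^ 2 := by
    rw [hA, Matrix.det_blockDiagonal]
    exact Finset.prod_congr rfl fun i _ => by rw [Matrix.det_fin_two_of]; ring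
  have hdetD : D.det = W ^ 2 := by rw [hD, Matrix.det_fin_two_of]; ring
  haveI : Invertible D :=
    D.invertibleOfIsUnitDet (by rw [hdetD]; exact isUnit_iff_ne_zero.mpr (pow_ne_zero 2 hW))
  have hDinv : ⅟D = !![(0 : ℂ), -W⁻¹; W⁻¹, 0] := by
    rw [Matrix.invOf_eq_nonsing_inv]
    apply Matrix.inv_eq_right_inv
    rw [hD]
    ext p q
    fin_cases p <;> fin_cases q <;>
      simp [Matrix.mul_apply, Fin.sum_univ_two, Matrix.one_apply, mul_inv_cancel₀ hW,
        neg_mul, mul_neg]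
  have hBDC : B * ⅟D * C = 0 := by
    rw [hDinv]
    ext x s
    simp [hB, hC, Matrix.mul_apply, Fin.sum_univ_two]
  have hdet : (XD l a w).det = W ^ 2 * ∏ i, a i ^ 2 := by
    rw [← Matrix.det_submatrix_equiv_self (eD l), hXblocks, Matrix.det_fromBlocks₂₂,
      hBDC, sub_zero, hdetA, hdetD]
  refine ⟨hdet, ?_, ?_, ?_⟩
  · intro pf hpf
    have hsq : pf ^ 2 = (W * ∏ i, a i) ^ 2 := by
      rw [hpf, hdet, mul_pow, Finset.prod_pow]
    have hfac : (pf - W * ∏ i, a i) * (pf + W * ∏ i, a i) = 0 := by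
      linear_combination hsq
    rcases mul_eq_zero.mp hfac with h | h
    · exact Or.inl (sub_eq_zero.mp h)
    · exact Or.inr (eq_neg_of_add_eq_zero_left h)
  · refine ⟨(∏ i, b i) / ∏ i, a i, ?_, div_mul_cancel₀ _ haprod⟩
    rw [div_pow, Finset.prod_pow, Finset.prod_pow]
  · refine ⟨-((∏ i, b i) / ∏ i, a i), ?_, ?_⟩
    · rw [neg_pow, div_pow, Finset.prod_pow, Finset.prod_pow]; ring
    · rw [neg_mul, div_mul_cancel₀ _ haprod]
end

section
/- Let x ∈ gl(n,ℂ) with n ≥ 2 and suppose x is strongly regular, meaning the differentials of the functions f_{i,j}(y) = trace((y_i)^j) for 1 ≤ j ≤ i ≤ n are linearly independent at x. Then for every 1 ≤ i ≤ n, the cutoff x_i is a regular element of gl(i,ℂ), i.e., its centralizer in gl(i,ℂ) has dimension exactly i. -/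
open Matrix

/-- The centralizer of `y` in `gl(m,ℂ)` as a subspace. -/
noncomputable def centSub (m : ℕ) (y : Matrix (Fin m) (Fin m) ℂ) :
    Submodule ℂ (Matrix (Fin m) (Fin m) ℂ) where
  carrier := {z | z * y = y * z}
  add_mem' := by
    intro a b ha hb
    simp only [Set.mem_setOf_eq] at *
    rw [add_mul, mul_add, ha, hb]
  zero_mem' := by simp
  smul_mem' := by
    intro c a ha
    simp only [Set.mem_setOf_eq] at *
    rw [smul_mul_assoc, mul_smul_comm, ha]

open Polynomial

section Emb

variable {n i : ℕ}

/-- Embedding of `gl(i)` into the top-left corner of `gl(n)`. -/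
def emb (hin : i ≤ n) : Matrix (Fin i) (Fin i) ℂ →ₗ[ℂ] Matrix (Fin n) (Fin n) ℂ where
  toFun M := Matrix.of fun a b =>
    if h : (a : ℕ) < i ∧ (b : ℕ) < i then M ⟨a, h.1⟩ ⟨b, h.2⟩ else 0
  map_add' M N := by
    ext a b
    simp only [Matrix.of_apply, Matrix.add_apply]
    split_ifs <;> simp
  map_smul' c M := by
    ext a b
    simp only [Matrix.of_apply, Matrix.smul_apply, RingHom.id_apply]
    split_ifs <;> simp

lemma emb_injective (hin : i ≤ n) : Function.Injective (emb hin) := by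
  intro M N h
  ext a b
  have := congrFun (congrFun h (Fin.castLE hin a)) (Fin.castLE hin b)
  simp only [emb, LinearMap.coe_mk, AddHom.coe_mk, Matrix.of_apply] at this
  rw [dif_pos ⟨a.isLt, b.isLt⟩, dif_pos ⟨a.isLt, b.isLt⟩] at this
  simpa using this

lemma submatrix_emb (hin : i ≤ n) (M : Matrix (Fin i) (Fin i) ℂ) :
    (emb hin M).submatrix (Fin.castLE hin) (Fin.castLE hin) = M := by
  ext a b
  simp only [Matrix.submatrix_apply, emb, LinearMap.coe_mk, AddHom.coe_mk, Matrix.of_apply]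
  rw [dif_pos ⟨a.isLt, b.isLt⟩]
  congr 1 <;> exact Fin.ext rfl

lemma cutoff_eq (hin : i ≤ n) (Y : Matrix (Fin n) (Fin n) ℂ) :
    cutoff n Y i = emb hin (Y.submatrix (Fin.castLE hin) (Fin.castLE hin)) := by
  ext a b
  simp only [cutoff, emb, LinearMap.coe_mk, AddHom.coe_mk, Matrix.of_apply]
  split_ifs with h
  · simp [Matrix.submatrix_apply]
  · rfl

lemma sum_fin_lt (hin : i ≤ n) (f : Fin n → ℂ) (hf : ∀ c : Fin n, ¬ (c : ℕ) < i → f c = 0) :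
    ∑ c : Fin n, f c = ∑ c : Fin i, f (Fin.castLE hin c) := by
  classical
  have hmap : ∑ c : Fin i, f (Fin.castLE hin c)
      = ∑ c ∈ Finset.univ.map ⟨Fin.castLE hin, Fin.castLE_injective hin⟩, f c :=
    (Finset.sum_map Finset.univ ⟨Fin.castLE hin, Fin.castLE_injective hin⟩ f).symm
  rw [hmap]
  refine (Finset.sum_subset (Finset.subset_univ _) ?_).symm
  intro c _ hc
  refine hf c fun hlt => hc ?_
  simp only [Finset.mem_map, Finset.mem_univ, Function.Embedding.coeFn_mk, true_and]
  exact ⟨⟨(c : ℕ), hlt⟩, Fin.ext rfl⟩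

lemma emb_pow_submatrix (hin : i ≤ n) (B : Matrix (Fin i) (Fin i) ℂ) (k : ℕ) :
    ((emb hin B) ^ k).submatrix (Fin.castLE hin) (Fin.castLE hin) = B ^ k := by
  induction k with
  | zero =>
      ext a b
      simp [Matrix.one_apply, Fin.castLE_injective hin |>.eq_iff]
  | succ k ih =>
      ext a b
      rw [pow_succ, pow_succ]
      simp only [Matrix.submatrix_apply, Matrix.mul_apply]
      rw [sum_fin_lt hin]
      · refine Finset.sum_congr rfl fun c _ => ?_
        have h1 : ((emb hin B) ^ k) (Fin.castLE hin a) (Fin.castLE hin c)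
            = (((emb hin B) ^ k).submatrix (Fin.castLE hin) (Fin.castLE hin)) a c := rfl
        have h2 : (emb hin B) (Fin.castLE hin c) (Fin.castLE hin b)
            = (((emb hin B)).submatrix (Fin.castLE hin) (Fin.castLE hin)) c b := rfl
        rw [h1, h2, ih, submatrix_emb]
      · intro c hc
        have : emb hin B c (Fin.castLE hin b) = 0 := by
          simp only [emb, LinearMap.coe_mk, AddHom.coe_mk, Matrix.of_apply]
          rw [dif_neg]
          intro h
          exact hc h.1
        rw [this, mul_zero]

lemma blkpow_eq (hin : i ≤ n) (x : Matrix (Fin n) (Fin n) ℂ) (k : ℕ) :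
    blkpow n x i k
      = emb hin ((x.submatrix (Fin.castLE hin) (Fin.castLE hin)) ^ k) := by
  rw [blkpow, cutoff_eq hin x, cutoff_eq hin, emb_pow_submatrix]

end Emb

section Cyclic

variable {m : ℕ}

/-- `M ↦ M *ᵥ v` as a linear map in the matrix. -/
noncomputable def mulVecL (v : Fin m → ℂ) : Matrix (Fin m) (Fin m) ℂ →ₗ[ℂ] (Fin m → ℂ) where
  toFun M := M.mulVec v
  map_add' M N := Matrix.add_mulVec M N v
  map_smul' c M := Matrix.smul_mulVec c M v

lemma mulVecL_apply (v : Fin m → ℂ) (M : Matrix (Fin m) (Fin m) ℂ) :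
    mulVecL v M = M.mulVec v := rfl

lemma eq_zero_of_mulVec_eq_zero {M : Matrix (Fin m) (Fin m) ℂ}
    (h : ∀ u : Fin m → ℂ, M.mulVec u = 0) : M = 0 := by
  ext a b
  have := congrFun (h (Pi.single b 1)) a
  rw [Matrix.mulVec_single] at this
  simpa using this

/-- The annihilator ideal of a vector `v` with respect to a matrix `A`. -/
noncomputable def annI (A : Matrix (Fin m) (Fin m) ℂ) (v : Fin m → ℂ) : Ideal (Polynomial ℂ) where
  carrier := {p | (aeval A p).mulVec v = 0}
  add_mem' := by
    intro p q hp hq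
    simp only [Set.mem_setOf_eq, map_add, Matrix.add_mulVec] at *
    rw [hp, hq, add_zero]
  zero_mem' := by simp
  smul_mem' := by
    intro c p hp
    simp only [Set.mem_setOf_eq, smul_eq_mul, _root_.map_mul] at *
    rw [← Matrix.mulVec_mulVec, hp, Matrix.mulVec_zero]

lemma mem_annI {A : Matrix (Fin m) (Fin m) ℂ} {v : Fin m → ℂ} {p : Polynomial ℂ} :
    p ∈ annI A v ↔ (aeval A p).mulVec v = 0 := Iff.rfl

lemma exists_cyclic (A : Matrix (Fin m) (Fin m) ℂ) :
    ∃ v : Fin m → ℂ, ∀ p : Polynomial ℂ,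
      (aeval A p).mulVec v = 0 → minpoly ℂ A ∣ p := by
  classical
  set μ := minpoly ℂ A with hμdef
  have hint : IsIntegral ℂ A := ⟨A.charpoly, A.charpoly_monic, A.aeval_self_charpoly⟩
  have hmonic : μ.Monic := minpoly.monic hint
  have haev : aeval A μ = 0 := minpoly.aeval ℂ A
  have hsplit : Splits μ := IsAlgClosed.splits μ
  set s : Finset ℂ := μ.roots.toFinset with hs
  set e : ℂ → ℕ := fun l => μ.roots.count l with he
  have hfac : μ = ∏ l ∈ s, (X - C l) ^ e l := by
    conv_lhs => rw [hsplit.eq_prod_roots_of_monic hmonic]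
    exact Finset.prod_multiset_map_count _ _
  set q : ℂ → Polynomial ℂ := fun l => ∏ k ∈ s.erase l, (X - C k) ^ e k with hq
  have hqmonic : ∀ l, (q l).Monic := fun l =>
    monic_prod_of_monic _ _ fun k _ => (monic_X_sub_C k).pow _
  have hμeq : ∀ l ∈ s, μ = (X - C l) ^ e l * q l := by
    intro l hl
    rw [hfac, ← Finset.mul_prod_erase s _ hl]
  have hepos : ∀ l ∈ s, 1 ≤ e l := by
    intro l hl
    exact Multiset.count_pos.2 (Multiset.mem_toFinset.1 hl)
  -- key construction for each root
  have hkey : ∀ l ∈ s, ∃ w : Fin m → ℂ,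
      (∀ p : Polynomial ℂ, (aeval A p).mulVec w = 0 → (X - C l) ^ e l ∣ p) ∧
      (∀ r : Polynomial ℂ, μ ∣ r * q l → (aeval A r).mulVec w = 0) := by
    intro l hl
    have h1e := hepos l hl
    -- the polynomial of degree one less than μ
    have hne : aeval A ((X - C l) ^ (e l - 1) * q l) ≠ 0 := by
      intro h0
      have hrmonic : ((X - C l) ^ (e l - 1) * q l).Monic :=
        ((monic_X_sub_C l).pow _).mul (hqmonic l)
      have hdlt : ((X - C l) ^ (e l - 1) * q l).natDegree < μ.natDegree := by
        rw [hμeq l hl, Polynomial.natDegree_mul (((monic_X_sub_C l).pow _).ne_zero)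
              ((hqmonic l).ne_zero),
            Polynomial.natDegree_mul (((monic_X_sub_C l).pow _).ne_zero)
              ((hqmonic l).ne_zero),
            Polynomial.natDegree_pow, Polynomial.natDegree_pow, natDegree_X_sub_C]
        omega
      have := Polynomial.natDegree_le_natDegree (minpoly.min ℂ A hrmonic h0)
      rw [← hμdef] at this
      omega
    obtain ⟨u, hu⟩ : ∃ u : Fin m → ℂ,
        (aeval A ((X - C l) ^ (e l - 1) * q l)).mulVec u ≠ 0 := by
      by_contra hcon
      push_neg at hcon
      exact hne (eq_zero_of_mulVec_eq_zero hcon)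
    refine ⟨(aeval A (q l)).mulVec u, ?_, ?_⟩
    · -- annihilator of w is exactly (X - C l) ^ e l
      intro p hp
      set I := annI A ((aeval A (q l)).mulVec u) with hI
      have hmemdvd : ∀ r : Polynomial ℂ, r ∈ I ↔ Submodule.IsPrincipal.generator I ∣ r := by
        intro r
        rw [← Submodule.IsPrincipal.mem_iff_generator_dvd]
      have hginI : Submodule.IsPrincipal.generator I ∣ (X - C l) ^ e l := by
        rw [← hmemdvd]
        show (aeval A ((X - C l) ^ e l)).mulVec ((aeval A (q l)).mulVec u) = 0
        rw [Matrix.mulVec_mulVec, ← _root_.map_mul, ← hμeq l hl, haev, Matrix.zero_mulVec]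
      obtain ⟨k, hk, hassoc⟩ := (dvd_prime_pow (prime_X_sub_C l) _).1 hginI
      have hnotmem : (X - C l) ^ (e l - 1) ∉ I := by
        show ¬ (aeval A ((X - C l) ^ (e l - 1))).mulVec ((aeval A (q l)).mulVec u) = 0
        rw [Matrix.mulVec_mulVec, ← _root_.map_mul]
        exact hu
      have hke : k = e l := by
        by_contra hkne
        have hkle : k ≤ e l - 1 := by omega
        exact hnotmem ((hmemdvd _).2 (hassoc.dvd.trans (pow_dvd_pow _ hkle)))
      have hgp : Submodule.IsPrincipal.generator I ∣ p := (hmemdvd p).1 hp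
      exact (hke ▸ hassoc.symm.dvd).trans hgp
    · intro r hr
      obtain ⟨t, ht⟩ := hr
      rw [Matrix.mulVec_mulVec, ← _root_.map_mul, ht, _root_.map_mul, haev, zero_mul,
        Matrix.zero_mulVec]
  -- choose witnesses and sum them
  choose w hw1 hw2 using hkey
  refine ⟨∑ l ∈ s.attach, w l.1 l.2, ?_⟩
  intro p hp
  rw [hfac]
  have hdvd : ∀ l ∈ s, (X - C l) ^ e l ∣ p := by
    intro l hl
    have hcopsingle : ∀ k ∈ s.erase l, IsCoprime (X - C l) (X - C k) := by
      intro k hk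
      exact isCoprime_X_sub_C_of_isUnit_sub
        (sub_ne_zero_of_ne (Finset.ne_of_mem_erase hk).symm).isUnit
    have hcop : IsCoprime ((X - C l) ^ e l) (q l) := by
      refine IsCoprime.pow_left ?_
      exact IsCoprime.prod_right fun k hk => ((hcopsingle k hk).pow_right)
    -- apply aeval (q l * p) to the sum
    have hsum : (aeval A (q l * p)).mulVec (∑ c ∈ s.attach, w c.1 c.2)
        = ∑ c ∈ s.attach, (aeval A (q l * p)).mulVec (w c.1 c.2) := by
      simpa only [Matrix.mulVecLin_apply] using
        map_sum (Matrix.mulVecLin (aeval A (q l * p))) (fun c : {x // x ∈ s} => w c.1 c.2)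
          s.attach
    have hzero : ∀ c : {x // x ∈ s}, c.1 ≠ l →
        (aeval A (q l * p)).mulVec (w c.1 c.2) = 0 := by
      intro c hc
      apply hw2 c.1 c.2
      have hls : l ∈ s.erase c.1 := Finset.mem_erase.2 ⟨fun h => hc h.symm, hl⟩
      have hqc : q c.1 = (X - C l) ^ e l * ∏ k ∈ (s.erase c.1).erase l, (X - C k) ^ e k :=
        (Finset.mul_prod_erase _ _ hls).symm
      have heq : (q l * p) * q c.1
          = μ * (p * ∏ k ∈ (s.erase c.1).erase l, (X - C k) ^ e k) := by
        rw [hμeq l hl, hqc]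
        ring
      exact heq ▸ dvd_mul_right μ _
    have hsingle : ∑ c ∈ s.attach, (aeval A (q l * p)).mulVec (w c.1 c.2)
        = (aeval A (q l * p)).mulVec (w l hl) := by
      refine Finset.sum_eq_single (⟨l, hl⟩ : {x // x ∈ s}) ?_ ?_
      · intro c _ hc
        exact hzero c fun h => hc (Subtype.ext h)
      · intro h
        exact absurd (s.mem_attach _) h
    have hzv : (aeval A (q l * p)).mulVec (∑ c ∈ s.attach, w c.1 c.2) = 0 := by
      rw [_root_.map_mul, ← Matrix.mulVec_mulVec, hp, Matrix.mulVec_zero]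
    have hwl : (aeval A (q l * p)).mulVec (w l hl) = 0 := by
      rw [← hsingle, ← hsum, hzv]
    have hdd : (X - C l) ^ e l ∣ q l * p := hw1 l hl _ hwl
    exact hcop.dvd_of_dvd_mul_left hdd
  exact Finset.prod_dvd_of_coprime
    (fun a ha b hb hab => (isCoprime_X_sub_C_of_isUnit_sub
      (sub_ne_zero_of_ne hab).isUnit).pow) hdvd

end Cyclic

/-- If `x ∈ gl(n,ℂ)` (`n ≥ 2`) is strongly regular, i.e. the differentials of
`f_{i,j}(y) = tr((y_i)^j)` for `1 ≤ j ≤ i ≤ n` — identified via the trace form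
with the matrices `j·(x_i)^{j-1}` embedded in `gl(n)` — are linearly
independent at `x`, then every cutoff `x_i` (`1 ≤ i ≤ n`) is a regular element
of `gl(i,ℂ)`: its centralizer in `gl(i,ℂ)` has dimension exactly `i`. -/
theorem strongly_regular_cutoffs_regular (n : ℕ) (hn : 2 ≤ n)
    (x : Matrix (Fin n) (Fin n) ℂ)
    (hsreg : LinearIndependent ℂ
      (fun p : {p : ℕ × ℕ // 1 ≤ p.2 ∧ p.2 ≤ p.1 ∧ p.1 ≤ n} =>
        ((p.1.2 : ℂ) • blkpow n x p.1.1 (p.1.2 - 1) : Matrix (Fin n) (Fin n) ℂ))) :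
    ∀ i : ℕ, 1 ≤ i → ∀ hin : i ≤ n,
      Module.finrank ℂ
        (centSub i (x.submatrix (Fin.castLE hin) (Fin.castLE hin))) = i := by
  intro i hi1 hin
  classical
  set B := x.submatrix (Fin.castLE hin) (Fin.castLE hin) with hB
  -- Step 1: the powers B^k, k < i, are linearly independent
  have hliB : LinearIndependent ℂ (fun k : Fin i => B ^ (k : ℕ)) := by
    have hg : Function.Injective (fun k : Fin i =>
        (⟨(i, (k : ℕ) + 1), ⟨Nat.le_add_left 1 _, by omega, hin⟩⟩ :
          {p : ℕ × ℕ // 1 ≤ p.2 ∧ p.2 ≤ p.1 ∧ p.1 ≤ n})) := by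
      intro a b hab
      have h2 := congrArg (fun z : {p : ℕ × ℕ // 1 ≤ p.2 ∧ p.2 ≤ p.1 ∧ p.1 ≤ n} => z.1.2) hab
      simp only at h2
      exact Fin.ext (by omega)
    have hsub := hsreg.comp _ hg
    rw [Fintype.linearIndependent_iff] at hsub ⊢
    intro c hc
    have hne : ∀ k : Fin i, (((k : ℕ) + 1 : ℕ) : ℂ) ≠ 0 := fun k =>
      Nat.cast_ne_zero.2 (Nat.succ_ne_zero _)
    have h0 : ∑ k : Fin i, (c k / (((k : ℕ) + 1 : ℕ) : ℂ)) •
        (((((k : ℕ) + 1 : ℕ)) : ℂ) • blkpow n x i ((k : ℕ) + 1 - 1)) = 0 := by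
      have hterm : ∀ k : Fin i, (c k / (((k : ℕ) + 1 : ℕ) : ℂ)) •
          (((((k : ℕ) + 1 : ℕ)) : ℂ) • blkpow n x i ((k : ℕ) + 1 - 1))
          = c k • emb hin (B ^ (k : ℕ)) := by
        intro k
        rw [smul_smul, div_mul_cancel₀ _ (hne k)]
        congr 1
        rw [Nat.add_sub_cancel, blkpow_eq hin]
      rw [Finset.sum_congr rfl fun k _ => hterm k]
      calc ∑ k : Fin i, c k • emb hin (B ^ (k : ℕ))
          = emb hin (∑ k : Fin i, c k • B ^ (k : ℕ)) := by
            rw [map_sum]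
            exact Finset.sum_congr rfl fun k _ => (_root_.map_smul _ _ _).symm
        _ = 0 := by rw [hc, map_zero]
    intro k
    have hk := hsub _ h0 k
    rcases div_eq_zero_iff.1 hk with h | h
    · exact h
    · exact absurd h (hne k)
  -- Step 2: the minimal polynomial of B has degree i
  have hint : IsIntegral ℂ B := ⟨B.charpoly, B.charpoly_monic, B.aeval_self_charpoly⟩
  have hdeg : (minpoly ℂ B).natDegree = i := by
    have hle : (minpoly ℂ B).natDegree ≤ i := by
      have h1 := Polynomial.natDegree_le_of_dvd (Matrix.minpoly_dvd_charpoly B)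
        B.charpoly_monic.ne_zero
      rwa [Matrix.charpoly_natDegree_eq_dim, Fintype.card_fin] at h1
    by_contra hnee
    have hlt : (minpoly ℂ B).natDegree < i := by omega
    have haev : aeval B (minpoly ℂ B) = 0 := minpoly.aeval ℂ B
    rw [Polynomial.aeval_eq_sum_range' hlt] at haev
    rw [Fintype.linearIndependent_iff] at hliB
    have hcoeff := hliB (fun k : Fin i => (minpoly ℂ B).coeff (k : ℕ)) ?_
    · have hm : (minpoly ℂ B).coeff (minpoly ℂ B).natDegree = 1 :=
        (minpoly.monic hint).coeff_natDegree
      have h1 := hcoeff ⟨(minpoly ℂ B).natDegree, hlt⟩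
      simp only at h1
      rw [hm] at h1
      exact one_ne_zero h1
    · rw [Fin.sum_univ_eq_sum_range (fun k => (minpoly ℂ B).coeff k • B ^ k)]
      exact haev
  -- Step 3: cyclic vector
  obtain ⟨v, hv⟩ := exists_cyclic B
  -- Step 4: the vectors B^k v, k < i, are linearly independent
  have hvec : LinearIndependent ℂ (fun k : Fin i => (B ^ (k : ℕ)).mulVec v) := by
    rw [Fintype.linearIndependent_iff]
    intro c hc
    set p : Polynomial ℂ := ∑ k : Fin i, Polynomial.monomial (k : ℕ) (c k) with hp
    have hterm : ∀ k : Fin i, aeval B (Polynomial.monomial (k : ℕ) (c k))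
        = c k • B ^ (k : ℕ) := by
      intro k
      rw [aeval_monomial, ← Algebra.smul_def]
    have hap : (aeval B p).mulVec v = 0 := by
      rw [hp, map_sum, Finset.sum_congr rfl fun k _ => hterm k,
        ← mulVecL_apply, map_sum (mulVecL v)]
      simp only [_root_.map_smul, mulVecL_apply]
      exact hc
    have hdvd := hv p hap
    have hp0 : p = 0 := by
      by_contra hne0
      have h1 := Polynomial.natDegree_le_of_dvd hdvd hne0
      have h2 : p.natDegree ≤ i - 1 :=
        Polynomial.natDegree_sum_le_of_forall_le _ _ fun k _ =>
          (Polynomial.natDegree_monomial_le _).trans (by omega)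
      omega
    intro k
    have hck : p.coeff (k : ℕ) = c k := by
      rw [hp, Polynomial.finset_sum_coeff]
      rw [Finset.sum_eq_single k]
      · simp [Polynomial.coeff_monomial]
      · intro b _ hb
        rw [Polynomial.coeff_monomial, if_neg (fun h => hb (Fin.ext h))]
      · intro h
        exact absurd (Finset.mem_univ _) h
    rw [hp0] at hck
    simpa using hck.symm
  -- Step 5: compute the dimension
  have hcard : Fintype.card (Fin i) = Module.finrank ℂ (Fin i → ℂ) := by
    rw [Module.finrank_fin_fun, Fintype.card_fin]
  have hnei : Nonempty (Fin i) := ⟨⟨0, hi1⟩⟩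
  have hspan := hvec.span_eq_top_of_card_eq_finrank hcard
  set φ : ↥(centSub i B) →ₗ[ℂ] (Fin i → ℂ) := (mulVecL v).comp (centSub i B).subtype with hφ
  have hker : ∀ z : ↥(centSub i B), φ z = 0 → z = 0 := by
    intro z hz
    have hcomm : (z : Matrix (Fin i) (Fin i) ℂ) * B = B * (z : Matrix (Fin i) (Fin i) ℂ) := z.2
    have hzv : (z : Matrix (Fin i) (Fin i) ℂ).mulVec v = 0 := hz
    have hzero : ∀ k : Fin i,
        (z : Matrix (Fin i) (Fin i) ℂ).mulVec ((B ^ (k : ℕ)).mulVec v) = 0 := by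
      intro k
      rw [Matrix.mulVec_mulVec, Commute.pow_right hcomm (k : ℕ), ← Matrix.mulVec_mulVec,
        hzv, Matrix.mulVec_zero]
    have hlin : (z : Matrix (Fin i) (Fin i) ℂ).mulVecLin = 0 := by
      apply LinearMap.ext_on hspan
      rintro u ⟨k, rfl⟩
      simpa [Matrix.mulVecLin_apply] using hzero k
    have hz0 : (z : Matrix (Fin i) (Fin i) ℂ) = 0 := by
      apply _root_.eq_zero_of_mulVec_eq_zero
      intro u
      have := LinearMap.congr_fun hlin u
      simpa [Matrix.mulVecLin_apply] using this
    exact Subtype.ext hz0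
  have hinj : Function.Injective φ := LinearMap.ker_eq_bot.1 (LinearMap.ker_eq_bot'.2 hker)
  have hup : Module.finrank ℂ ↥(centSub i B) ≤ i := by
    have := LinearMap.finrank_le_finrank_of_injective hinj
    rwa [Module.finrank_fin_fun] at this
  have hlow : i ≤ Module.finrank ℂ ↥(centSub i B) := by
    have hmem : ∀ k : ℕ, B ^ k ∈ centSub i B := by
      intro k
      show B ^ k * B = B * B ^ k
      rw [← pow_succ, ← pow_succ']
    have hF : LinearIndependent ℂ
        (fun k : Fin i => (⟨B ^ (k : ℕ), hmem _⟩ : ↥(centSub i B))) := by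
      apply LinearIndependent.of_comp (centSub i B).subtype
      exact hliB
    simpa using hF.fintype_card_le_finrank
  omega
end
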